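/- arXiv:1204.6633 — 7 statements merged into one kernel-verified Lean document; each statement's English description precedes it below -/
import Mathlib

section
/- Let z̃ : ℝ → ℂ be twice differentiable at a point α with z̃'(α) ≠ 0, and let g : ℂ → ℂ be holomorphic on a neighborhood of z̃(α) with g'(z̃(α)) ≠ 0 (and g twice complex differentiable there). Set z = g ∘ z̃ and Q = 1/|g'(z̃(α))|. Then z'(α) ≠ 0, and the curvatures satisfy κ_z(α) = Q·κ_{z̃}(α) + Q³·Im( conj(g'(z̃(α))) · g''(z̃(α)) · z̃'(α) ) / |z̃'(α)|. -/
open Complex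

/-- Curvature of a plane curve `w : ℝ → ℂ` at a parameter `α`:
`κ_w(α) = Im(conj(w'(α)) · w''(α)) / |w'(α)|³`. -/
noncomputable def curvature (w : ℝ → ℂ) (α : ℝ) : ℝ :=
  ((starRingEnd ℂ) (deriv w α) * deriv (deriv w) α).im / ‖deriv w α‖ ^ 3

theorem curvature_comp_conformal (zc : ℝ → ℂ) (α : ℝ) (g : ℂ → ℂ) (s : Set ℂ)
    (hs : IsOpen s) (hmem : zc α ∈ s)
    (hz1 : DifferentiableAt ℝ zc α)
    (hz2 : DifferentiableAt ℝ (deriv zc) α)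
    (hz' : deriv zc α ≠ 0)
    (hg : ∀ w ∈ s, DifferentiableAt ℂ g w)
    (hg2 : DifferentiableAt ℂ (deriv g) (zc α))
    (hg' : deriv g (zc α) ≠ 0) :
    deriv (g ∘ zc) α ≠ 0 ∧
    curvature (g ∘ zc) α =
      (1 / ‖deriv g (zc α)‖) * curvature zc α +
        (1 / ‖deriv g (zc α)‖) ^ 3 *
          ((starRingEnd ℂ) (deriv g (zc α)) * deriv (deriv g) (zc α) * deriv zc α).im /
          ‖deriv zc α‖ := by
  set A := deriv g (zc α) with hA
  set B := deriv (deriv g) (zc α) with hB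
  set u := deriv zc α with hu
  set v := deriv (deriv zc) α with hv
  -- first derivative at α
  have hd1 : HasDerivAt (g ∘ zc) (A * u) α :=
    ((hg _ hmem).hasDerivAt.comp α hz1.hasDerivAt)
  have hderiv1 : deriv (g ∘ zc) α = A * u := hd1.deriv
  -- eventual equality of first derivative
  have hne : ∀ᶠ t in nhds α, deriv zc t ≠ 0 := hz2.continuousAt.eventually_ne hz'
  have hmems : ∀ᶠ t in nhds α, zc t ∈ s :=
    hz1.continuousAt.preimage_mem_nhds (hs.mem_nhds hmem)
  have heq : deriv (g ∘ zc) =ᶠ[nhds α] fun t => deriv g (zc t) * deriv zc t := by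
    filter_upwards [hne, hmems] with t ht1 ht2
    have hzt : DifferentiableAt ℝ zc t := by
      by_contra h
      exact ht1 (deriv_zero_of_not_differentiableAt h)
    exact ((hg _ ht2).hasDerivAt.comp t hzt.hasDerivAt).deriv
  -- second derivative
  have hD : HasDerivAt (fun t => deriv g (zc t) * deriv zc t) (B * u * u + A * v) α := by
    have h1 : HasDerivAt (fun t => deriv g (zc t)) (B * u) α :=
      hg2.hasDerivAt.comp α hz1.hasDerivAt
    exact h1.mul hz2.hasDerivAt
  have hderiv2 : deriv (deriv (g ∘ zc)) α = B * u * u + A * v := by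
    rw [heq.deriv_eq]
    exact hD.deriv
  have hAu : A * u ≠ 0 := mul_ne_zero hg' hz'
  refine ⟨by rw [hderiv1]; exact hAu, ?_⟩
  -- curvature computation
  have key : ((starRingEnd ℂ) (A * u) * (B * u * u + A * v)).im =
      ‖u‖ ^ 2 * ((starRingEnd ℂ) A * B * u).im +
        ‖A‖ ^ 2 * ((starRingEnd ℂ) u * v).im := by
    have e1 : (starRingEnd ℂ) (A * u) * (B * u * u + A * v) =
        ((starRingEnd ℂ) u * u) * ((starRingEnd ℂ) A * B * u) +
          ((starRingEnd ℂ) A * A) * ((starRingEnd ℂ) u * v) := by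
      rw [map_mul]; ring
    rw [e1, Complex.conj_mul', Complex.conj_mul']
    simp [Complex.add_im, Complex.mul_im, ← Complex.ofReal_pow, Complex.sq_norm]
  have hrA : ‖A‖ ≠ 0 := norm_ne_zero_iff.mpr hg'
  have hru : ‖u‖ ≠ 0 := norm_ne_zero_iff.mpr hz'
  rw [curvature, curvature, hderiv1, hderiv2, ← hu, key, norm_mul]
  field_simp
  ring
end

section
/- Let z : ℝ × ℝ → ℝ², (α,t) ↦ z(α,t), be twice continuously differentiable, with z(α+2π, t) = z(α,t) + (2π, 0) for all α, t, and ∂_α z(α,t) ≠ 0 for all α, t. Then for every t, the function t ↦ ∫_{−π}^{π} |∂_α z(α,t)| dα is differentiable and d/dt ∫_{−π}^{π} |∂_α z(α,t)| dα = − ∫_{−π}^{π} ( ∂_α² z(α,t) · (∂_α z(α,t))^⊥ ) ( ∂_t z(α,t) · (∂_α z(α,t))^⊥ ) / |∂_α z(α,t)|³ dα. -/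
open Real MeasureTheory

/-- Real inner product on `ℂ ≅ ℝ²`:  `u · v = Re(conj u · v)`. -/
noncomputable def rdot (u v : ℂ) : ℝ := ((starRingEnd ℂ) u * v).re

/-- Rotation by `π/2`, i.e. `(a,b)^⊥ = (−b,a)` under the identification `ℂ ≅ ℝ²`. -/
def pperp (u : ℂ) : ℂ := Complex.I * u

lemma rdot_eq (u v : ℂ) : rdot u v = u.re * v.re + u.im * v.im := by
  simp [rdot, Complex.mul_re]

lemma rdot_comm (u v : ℂ) : rdot u v = rdot v u := by simp [rdot_eq]; ring

lemma abs_rdot_le (u v : ℂ) : |rdot u v| ≤ ‖u‖ * ‖v‖ := by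
  have h : |rdot u v| ≤ ‖(starRingEnd ℂ) u * v‖ := Complex.abs_re_le_norm _
  simpa [map_mul] using h

lemma sq_abs' (w : ℂ) : ‖w‖ ^ 2 = w.re ^ 2 + w.im ^ 2 := by
  rw [Complex.sq_norm, Complex.normSq_apply]; ring

lemma lagrange (u v w : ℂ) :
    rdot u (pperp w) * rdot v (pperp w)
      = ‖w‖ ^ 2 * rdot u v - rdot u w * rdot v w := by
  rw [sq_abs']
  simp only [rdot_eq, pperp, Complex.mul_re, Complex.mul_im, Complex.I_re, Complex.I_im]
  ring

lemma abs_rdot_div_le (u v : ℂ) (hv : v ≠ 0) :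
    |rdot u v / ‖v‖| ≤ ‖u‖ := by
  rw [abs_div, abs_of_nonneg (norm_nonneg v),
    div_le_iff₀ (norm_pos_iff.mpr hv)]
  exact abs_rdot_le u v

lemma key_id (Ba Aa za va : ℂ) (h0 : va ≠ 0) :
    rdot Ba va / ‖va‖ =
      ((rdot Ba va + rdot za Aa) * ‖va‖
          - rdot za va * (rdot Aa va / ‖va‖)) / ‖va‖ ^ 2
        - rdot Aa (pperp va) * rdot za (pperp va) / ‖va‖ ^ 3 := by
  have hr : ‖va‖ ≠ 0 := norm_ne_zero_iff.mpr h0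
  rw [lagrange Aa za va, rdot_comm za Aa]
  field_simp
  ring

lemma hasDerivAt_cabs {w : ℝ → ℂ} {w' : ℂ} {x : ℝ} (hw : HasDerivAt w w' x)
    (h0 : w x ≠ 0) :
    HasDerivAt (fun y => ‖w y‖) (rdot w' (w x) / ‖w x‖) x := by
  have hre : HasDerivAt (fun y => (w y).re) w'.re x :=
    Complex.reCLM.hasFDerivAt.comp_hasDerivAt x hw
  have him : HasDerivAt (fun y => (w y).im) w'.im x :=
    Complex.imCLM.hasFDerivAt.comp_hasDerivAt x hw
  have hn : HasDerivAt (fun y => (w y).re ^ 2 + (w y).im ^ 2)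
      ((2 : ℕ) * (w x).re ^ 1 * w'.re + (2 : ℕ) * (w x).im ^ 1 * w'.im) x :=
    (hre.pow 2).add (him.pow 2)
  have hpos : (0:ℝ) < (w x).re ^ 2 + (w x).im ^ 2 := by
    rw [← sq_abs']
    have := norm_pos_iff.mpr h0
    positivity
  have hs := (Real.hasDerivAt_sqrt (ne_of_gt hpos)).comp x hn
  have hkey : Real.sqrt ((w x).re ^ 2 + (w x).im ^ 2) = ‖w x‖ := by
    rw [← sq_abs', Real.sqrt_sq (norm_nonneg _)]
  have hfun : (fun y => ‖w y‖) =
      (Real.sqrt ∘ fun y => (w y).re ^ 2 + (w y).im ^ 2) := by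
    funext y
    simp [Function.comp, ← sq_abs', Real.sqrt_sq (norm_nonneg _)]
  rw [hfun]
  refine HasDerivAt.congr_deriv hs ?_
  rw [hkey, rdot_eq]
  have hr : ‖w x‖ ≠ 0 := norm_ne_zero_iff.mpr h0
  field_simp
  ring

lemma HasDerivAt.rdot' {u v : ℝ → ℂ} {u' v' : ℂ} {x : ℝ}
    (hu : HasDerivAt u u' x) (hv : HasDerivAt v v' x) :
    HasDerivAt (fun y => rdot (u y) (v y)) (rdot u' (v x) + rdot (u x) v') x := by
  have hure : HasDerivAt (fun y => (u y).re) u'.re x :=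
    Complex.reCLM.hasFDerivAt.comp_hasDerivAt x hu
  have huim : HasDerivAt (fun y => (u y).im) u'.im x :=
    Complex.imCLM.hasFDerivAt.comp_hasDerivAt x hu
  have hvre : HasDerivAt (fun y => (v y).re) v'.re x :=
    Complex.reCLM.hasFDerivAt.comp_hasDerivAt x hv
  have hvim : HasDerivAt (fun y => (v y).im) v'.im x :=
    Complex.imCLM.hasFDerivAt.comp_hasDerivAt x hv
  have h := (hure.mul hvre).add (huim.mul hvim)
  have hfun : (fun y => rdot (u y) (v y))
      = fun y => (u y).re * (v y).re + (u y).im * (v y).im := by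
    funext y; rw [rdot_eq]
  rw [hfun]
  refine HasDerivAt.congr_deriv h ?_
  simp [rdot_eq]; ring

lemma Continuous.rdot' {X : Type*} [TopologicalSpace X] {f g : X → ℂ}
    (hf : Continuous f) (hg : Continuous g) : Continuous fun x => rdot (f x) (g x) := by
  simp only [rdot_eq]
  exact ((Complex.continuous_re.comp hf).mul (Complex.continuous_re.comp hg)).add
    ((Complex.continuous_im.comp hf).mul (Complex.continuous_im.comp hg))


/-- Time derivative of the surface-tension energy `∫ |∂_α z| dα` of a horizontally
`2π`-periodic interface: it equals
`−∫ (∂_α² z · ∂_α z^⊥)(∂_t z · ∂_α z^⊥)/|∂_α z|³ dα`. -/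
theorem deriv_length_energy (z : ℝ → ℝ → ℂ)
    (hz : ContDiff ℝ 2 (fun p : ℝ × ℝ => z p.1 p.2))
    (hper : ∀ α t : ℝ, z (α + 2 * π) t = z α t + 2 * π)
    (hza : ∀ α t : ℝ, deriv (fun a => z a t) α ≠ 0) (t : ℝ) :
    HasDerivAt (fun s => ∫ α in (-π)..π, ‖deriv (fun a => z a s) α‖)
      (-∫ α in (-π)..π,
        rdot (deriv (fun a => deriv (fun a' => z a' t) a) α) (pperp (deriv (fun a => z a t) α)) *
          rdot (deriv (fun s => z α s) t) (pperp (deriv (fun a => z a t) α)) /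
          ‖deriv (fun a => z a t) α‖ ^ 3) t := by
  set Z : ℝ × ℝ → ℂ := fun p => z p.1 p.2 with hZdef
  have hZd : Differentiable ℝ Z := hz.differentiable (by norm_num)
  have hf1 : ContDiff ℝ 1 (fderiv ℝ Z) := hz.fderiv_right (by norm_num)
  set f1 : ℝ × ℝ → ℝ × ℝ →L[ℝ] ℂ := fderiv ℝ Z with hf1def
  set f2 : ℝ × ℝ → (ℝ × ℝ) →L[ℝ] (ℝ × ℝ) →L[ℝ] ℂ := fderiv ℝ f1 with hf2def
  have hf1d : Differentiable ℝ f1 := hf1.differentiable one_ne_zero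
  have hf2c : Continuous f2 := hf1.continuous_fderiv one_ne_zero
  set zα : ℝ → ℝ → ℂ := fun a s => f1 (a, s) (1, 0) with hzαdef
  set zs : ℝ → ℝ → ℂ := fun a s => f1 (a, s) (0, 1) with hzsdef
  set A : ℝ → ℝ → ℂ := fun a s => f2 (a, s) (1, 0) (1, 0) with hAdef
  set B : ℝ → ℝ → ℂ := fun a s => f2 (a, s) (0, 1) (1, 0) with hBdef
  have hc1 : ∀ (a s : ℝ), HasDerivAt (fun x : ℝ => ((x, s) : ℝ × ℝ)) (1, 0) a :=
    fun a s => (hasDerivAt_id a).prodMk (hasDerivAt_const a s)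
  have hc2 : ∀ (a s : ℝ), HasDerivAt (fun x : ℝ => ((a, x) : ℝ × ℝ)) (0, 1) s :=
    fun a s => (hasDerivAt_const s a).prodMk (hasDerivAt_id s)
  have hDα : ∀ a s : ℝ, HasDerivAt (fun x => z x s) (zα a s) a := fun a s =>
    by have := (hZd (a, s)).hasFDerivAt.comp_hasDerivAt a (hc1 a s); exact this
  have hDs : ∀ a s : ℝ, HasDerivAt (fun x => z a x) (zs a s) s := fun a s =>
    (hZd (a, s)).hasFDerivAt.comp_hasDerivAt s (hc2 a s)
  have hf1α : ∀ a s : ℝ, HasDerivAt (fun x : ℝ => f1 (x, s)) (f2 (a, s) (1, 0)) a :=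
    fun a s => (hf1d (a, s)).hasFDerivAt.comp_hasDerivAt a (hc1 a s)
  have hf1s : ∀ a s : ℝ, HasDerivAt (fun x : ℝ => f1 (a, x)) (f2 (a, s) (0, 1)) s :=
    fun a s => (hf1d (a, s)).hasFDerivAt.comp_hasDerivAt s (hc2 a s)
  have hA' : ∀ a s : ℝ, HasDerivAt (fun x => zα x s) (A a s) a := fun a s =>
    (ContinuousLinearMap.apply ℝ ℂ ((1, 0) : ℝ × ℝ)).hasFDerivAt.comp_hasDerivAt a (hf1α a s)
  have hB' : ∀ a s : ℝ, HasDerivAt (fun x => zα a x) (B a s) s := fun a s =>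
    (ContinuousLinearMap.apply ℝ ℂ ((1, 0) : ℝ × ℝ)).hasFDerivAt.comp_hasDerivAt s (hf1s a s)
  have hsymm : ∀ (p : ℝ × ℝ) (u v : ℝ × ℝ), f2 p u v = f2 p v u := fun p u v =>
    (hz.contDiffAt.isSymmSndFDerivAt (by norm_num)) u v
  have hzsα : ∀ a s : ℝ, HasDerivAt (fun x => zs x s) (B a s) a := fun a s => by
    have := (ContinuousLinearMap.apply ℝ ℂ ((0, 1) : ℝ × ℝ)).hasFDerivAt.comp_hasDerivAt a
      (hf1α a s)
    exact this.congr_deriv (hsymm (a, s) (1, 0) (0, 1))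
  have hza' : ∀ a s : ℝ, zα a s ≠ 0 := fun a s => by
    have h := hza a s
    rwa [(hDα a s).deriv] at h
  have habs0 : ∀ a s : ℝ, ‖zα a s‖ ≠ 0 := fun a s => norm_ne_zero_iff.mpr (hza' a s)
  -- periodicity
  have hzαper : ∀ a s : ℝ, zα (a + 2 * π) s = zα a s := fun a s => by
    have hshift : HasDerivAt (fun x : ℝ => x + 2 * π) 1 a := by
      simpa using (hasDerivAt_id a).add_const (2 * π)
    have h1 : HasDerivAt (fun x => z (x + 2 * π) s) ((1 : ℝ) • zα (a + 2 * π) s) a := by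
      have := (hDα (a + 2 * π) s).scomp a hshift
      exact this
    have h2 : HasDerivAt (fun x => z (x + 2 * π) s) (zα a s) a := by
      have he : (fun x => z (x + 2 * π) s) = fun x => z x s + 2 * π := funext fun x => hper x s
      rw [he]; exact (hDα a s).add_const _
    have := h1.unique h2
    simpa using this
  have hzsper : ∀ a s : ℝ, zs (a + 2 * π) s = zs a s := fun a s => by
    have h2 : HasDerivAt (fun x => z (a + 2 * π) x) (zs a s) s := by
      have he : (fun x => z (a + 2 * π) x) = fun x => z a x + 2 * π := funext fun x => hper a x
      rw [he]; exact (hDs a s).add_const _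
    exact (hDs (a + 2 * π) s).unique h2
  -- continuity
  have hprc : Continuous (fun p : ℝ × ℝ => ((p.1, p.2) : ℝ × ℝ)) :=
    continuous_fst.prodMk continuous_snd
  have czα : Continuous (fun p : ℝ × ℝ => zα p.1 p.2) :=
    (hf1.continuous.comp hprc).clm_apply continuous_const
  have czs : Continuous (fun p : ℝ × ℝ => zs p.1 p.2) :=
    (hf1.continuous.comp hprc).clm_apply continuous_const
  have cA : Continuous (fun p : ℝ × ℝ => A p.1 p.2) :=
    ((hf2c.comp hprc).clm_apply continuous_const).clm_apply continuous_const
  have cB : Continuous (fun p : ℝ × ℝ => B p.1 p.2) :=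
    ((hf2c.comp hprc).clm_apply continuous_const).clm_apply continuous_const
  have czα1 : ∀ s : ℝ, Continuous (fun a => zα a s) := fun s =>
    czα.comp (continuous_id.prodMk continuous_const)
  have czα2 : ∀ s : ℝ, Continuous (fun a => zα a s) := czα1
  have czs1 : ∀ s : ℝ, Continuous (fun a => zs a s) := fun s =>
    czs.comp (continuous_id.prodMk continuous_const)
  have cA1 : ∀ s : ℝ, Continuous (fun a => A a s) := fun s =>
    cA.comp (continuous_id.prodMk continuous_const)
  have cB1 : ∀ s : ℝ, Continuous (fun a => B a s) := fun s =>
    cB.comp (continuous_id.prodMk continuous_const)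
  -- the parametric derivative
  set F' : ℝ → ℝ → ℝ := fun x a => rdot (B a x) (zα a x) / ‖zα a x‖ with hF'def
  -- bound via compactness
  obtain ⟨C, hC⟩ := ((isCompact_uIcc (a := -π) (b := π)).prod
    (isCompact_closedBall t 1)).exists_bound_of_continuousOn cB.continuousOn
  have hmain : HasDerivAt (fun x => ∫ a in (-π)..π, ‖zα a x‖)
      (∫ a in (-π)..π, F' t a) t := by
    have h := intervalIntegral.hasDerivAt_integral_of_dominated_loc_of_deriv_le
      (F := fun x a => ‖zα a x‖) (F' := F') (x₀ := t)
      (a := -π) (b := π) (bound := fun _ => C) (μ := volume) (s := Metric.ball t 1) (Metric.ball_mem_nhds t one_pos)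
      (Filter.Eventually.of_forall fun x =>
        ((continuous_norm.comp (czα1 x)).aestronglyMeasurable))
      ((continuous_norm.comp (czα1 t)).continuousOn.intervalIntegrable)
      (((Continuous.rdot' (cB1 t) (czα1 t)).div (continuous_norm.comp (czα1 t))
        (fun a => habs0 a t)).aestronglyMeasurable)
      (Filter.Eventually.of_forall fun a ha x hx => by
        have h1 : |F' x a| ≤ ‖B a x‖ := abs_rdot_div_le _ _ (hza' a x)
        have h2 : ‖B a x‖ ≤ C := by
          have := hC (a, x) ⟨Set.uIoc_subset_uIcc ha, Metric.ball_subset_closedBall hx⟩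
          simpa using this
        calc ‖F' x a‖ = |F' x a| := rfl
          _ ≤ ‖B a x‖ := h1
          _ = ‖B a x‖ := rfl
          _ ≤ C := h2)
      (intervalIntegrable_const)
      (Filter.Eventually.of_forall fun a ha x hx => hasDerivAt_cabs (hB' a x) (hza' a x))
    exact h.2
  -- rewrite the goal's function
  have hfun : (fun s => ∫ α in (-π)..π, ‖deriv (fun a => z a s) α‖)
      = fun s => ∫ a in (-π)..π, ‖zα a s‖ := by
    funext s
    congr 1
    funext a
    rw [(hDα a s).deriv]
  rw [hfun]
  -- rewrite the goal's value
  have hintg : (fun α => rdot (deriv (fun a => deriv (fun a' => z a' t) a) α)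
        (pperp (deriv (fun a => z a t) α)) *
        rdot (deriv (fun s => z α s) t) (pperp (deriv (fun a => z a t) α)) /
        ‖deriv (fun a => z a t) α‖ ^ 3)
      = fun a => rdot (A a t) (pperp (zα a t)) * rdot (zs a t) (pperp (zα a t)) /
          ‖zα a t‖ ^ 3 := by
    funext a
    have h1 : (fun a' => deriv (fun x => z x t) a') = fun a' => zα a' t :=
      funext fun a' => (hDα a' t).deriv
    rw [h1, (hA' a t).deriv, (hDs a t).deriv, (hDα a t).deriv]
  rw [hintg]
  -- integration by parts
  set h : ℝ → ℝ := fun a => rdot (A a t) (pperp (zα a t)) * rdot (zs a t) (pperp (zα a t)) /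
    ‖zα a t‖ ^ 3 with hhdef
  set g : ℝ → ℝ := fun a => rdot (zs a t) (zα a t) / ‖zα a t‖ with hgdef
  set G' : ℝ → ℝ := fun a =>
    ((rdot (B a t) (zα a t) + rdot (zs a t) (A a t)) * ‖zα a t‖
      - rdot (zs a t) (zα a t) * (rdot (A a t) (zα a t) / ‖zα a t‖)) /
      ‖zα a t‖ ^ 2 with hG'def
  have hg : ∀ a : ℝ, HasDerivAt g (G' a) a := fun a => by
    have hnum : HasDerivAt (fun x => rdot (zs x t) (zα x t))
        (rdot (B a t) (zα a t) + rdot (zs a t) (A a t)) a :=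
      (hzsα a t).rdot' (hA' a t)
    have hden := hasDerivAt_cabs (hA' a t) (hza' a t)
    exact hnum.div hden (habs0 a t)
  have hkey : ∀ a : ℝ, F' t a = G' a - h a := fun a =>
    key_id (B a t) (A a t) (zs a t) (zα a t) (hza' a t)
  have cGden : Continuous fun a => ‖zα a t‖ :=
    continuous_norm.comp (czα1 t)
  have hG'int : IntervalIntegrable G' volume (-π) π := by
    apply Continuous.intervalIntegrable
    apply Continuous.div
    · exact (((Continuous.rdot' (cB1 t) (czα1 t)).add
        ((Continuous.rdot' (czs1 t) (cA1 t)))).mul cGden).sub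
        ((Continuous.rdot' (czs1 t) (czα1 t)).mul
          ((Continuous.rdot' (cA1 t) (czα1 t)).div cGden fun a => habs0 a t))
    · exact cGden.pow 2
    · intro a; exact pow_ne_zero 2 (habs0 a t)
  have hhint : IntervalIntegrable h volume (-π) π := by
    apply Continuous.intervalIntegrable
    apply Continuous.div
    · simp only [pperp]
      exact (Continuous.rdot' (cA1 t) (continuous_const.mul (czα1 t))).mul
        (Continuous.rdot' (czs1 t) (continuous_const.mul (czα1 t)))
    · exact cGden.pow 3
    · intro a; exact pow_ne_zero 3 (habs0 a t)
  have hGint : ∫ a in (-π)..π, G' a = g π - g (-π) :=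
    intervalIntegral.integral_eq_sub_of_hasDerivAt (fun a _ => hg a) hG'int
  have hgper : g π = g (-π) := by
    have h1 : g (-π + 2 * π) = g (-π) := by simp only [hgdef, hzsper, hzαper]
    have h2 : -π + 2 * π = π := by ring
    rw [h2] at h1
    exact h1
  have hval : (∫ a in (-π)..π, F' t a) = -∫ a in (-π)..π, h a := by
    have he : (fun a => F' t a) = fun a => G' a - h a := funext hkey
    calc (∫ a in (-π)..π, F' t a) = ∫ a in (-π)..π, (G' a - h a) := by rw [he]
      _ = (∫ a in (-π)..π, G' a) - ∫ a in (-π)..π, h a :=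
          intervalIntegral.integral_sub hG'int hhint
      _ = (g π - g (-π)) - ∫ a in (-π)..π, h a := by rw [hGint]
      _ = -∫ a in (-π)..π, h a := by rw [hgper]; ring
  rw [← hval]
  exact hmain
end

section
/- Let z = (z₁, z₂) : ℝ × ℝ → ℝ², (α,t) ↦ z(α,t), be twice continuously differentiable, with z₁(α+2π,t) = z₁(α,t) + 2π and z₂(α+2π,t) = z₂(α,t) for all α, t. Then for every t, d/dt [ (1/2) ∫_{−π}^{π} z₂(α,t)² ∂_α z₁(α,t) dα ] = ∫_{−π}^{π} z₂(α,t) ( ∂_t z(α,t) · (∂_α z(α,t))^⊥ ) dα, where (a,b)^⊥ = (−b, a). -/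
open Real MeasureTheory

noncomputable def pd1 (f : ℝ → ℝ → ℝ) (α s : ℝ) : ℝ :=
  fderiv ℝ (fun p : ℝ × ℝ => f p.1 p.2) (α, s) (1, 0)

noncomputable def pd2 (f : ℝ → ℝ → ℝ) (α s : ℝ) : ℝ :=
  fderiv ℝ (fun p : ℝ × ℝ => f p.1 p.2) (α, s) (0, 1)

noncomputable def pd12 (f : ℝ → ℝ → ℝ) (α s : ℝ) : ℝ :=
  fderiv ℝ (fderiv ℝ (fun p : ℝ × ℝ => f p.1 p.2)) (α, s) (1, 0) (0, 1)

lemma hasDerivAt_pd1 (f : ℝ → ℝ → ℝ)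
    (hf : Differentiable ℝ (fun p : ℝ × ℝ => f p.1 p.2)) (α s : ℝ) :
    HasDerivAt (fun a => f a s) (pd1 f α s) α := by
  have h := (hf (α, s)).hasFDerivAt.comp_hasDerivAt α
    ((hasDerivAt_id α).prodMk (hasDerivAt_const α s))
  simpa [pd1, Function.comp_def] using h

lemma hasDerivAt_pd2 (f : ℝ → ℝ → ℝ)
    (hf : Differentiable ℝ (fun p : ℝ × ℝ => f p.1 p.2)) (α s : ℝ) :
    HasDerivAt (fun b => f α b) (pd2 f α s) s := by
  have h := (hf (α, s)).hasFDerivAt.comp_hasDerivAt s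
    ((hasDerivAt_const s α).prodMk (hasDerivAt_id s))
  simpa [pd2, Function.comp_def] using h

lemma hasDerivAt_pd2_a (f : ℝ → ℝ → ℝ)
    (hf : ContDiff ℝ 2 (fun p : ℝ × ℝ => f p.1 p.2)) (α s : ℝ) :
    HasDerivAt (fun a => pd2 f a s) (pd12 f α s) α := by
  set Z : ℝ × ℝ → ℝ := fun p => f p.1 p.2 with hZ
  have hf' : Differentiable ℝ (fderiv ℝ Z) :=
    (hf.fderiv_right (m := 1) (by norm_num)).differentiable one_ne_zero
  have h1 : HasFDerivAt (fun p => fderiv ℝ Z p (0, 1))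
      ((ContinuousLinearMap.apply ℝ ℝ ((0 : ℝ), (1 : ℝ))).comp
        (fderiv ℝ (fderiv ℝ Z) (α, s))) (α, s) :=
    (ContinuousLinearMap.apply ℝ ℝ ((0 : ℝ), (1 : ℝ))).hasFDerivAt.comp _
      (hf' (α, s)).hasFDerivAt
  have h2 := h1.comp_hasDerivAt α ((hasDerivAt_id α).prodMk (hasDerivAt_const α s))
  simpa [pd2, pd12, Function.comp_def] using h2

lemma second_symm (f : ℝ → ℝ → ℝ)
    (hf : ContDiff ℝ 2 (fun p : ℝ × ℝ => f p.1 p.2)) (p v w : ℝ × ℝ) :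
    fderiv ℝ (fderiv ℝ (fun q : ℝ × ℝ => f q.1 q.2)) p v w
      = fderiv ℝ (fderiv ℝ (fun q : ℝ × ℝ => f q.1 q.2)) p w v :=
  second_derivative_symmetric
    (fun y => ((hf.differentiable two_ne_zero) y).hasFDerivAt)
    (((hf.fderiv_right (m := 1) (by norm_num)).differentiable one_ne_zero p).hasFDerivAt) v w

lemma hasDerivAt_pd1_t (f : ℝ → ℝ → ℝ)
    (hf : ContDiff ℝ 2 (fun p : ℝ × ℝ => f p.1 p.2)) (α s : ℝ) :
    HasDerivAt (fun b => pd1 f α b) (pd12 f α s) s := by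
  set Z : ℝ × ℝ → ℝ := fun p => f p.1 p.2 with hZ
  have hf' : Differentiable ℝ (fderiv ℝ Z) :=
    (hf.fderiv_right (m := 1) (by norm_num)).differentiable one_ne_zero
  have h1 : HasFDerivAt (fun p => fderiv ℝ Z p (1, 0))
      ((ContinuousLinearMap.apply ℝ ℝ ((1 : ℝ), (0 : ℝ))).comp
        (fderiv ℝ (fderiv ℝ Z) (α, s))) (α, s) :=
    (ContinuousLinearMap.apply ℝ ℝ ((1 : ℝ), (0 : ℝ))).hasFDerivAt.comp _
      (hf' (α, s)).hasFDerivAt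
  have h2 := h1.comp_hasDerivAt s ((hasDerivAt_const s α).prodMk (hasDerivAt_id s))
  have h3 : fderiv ℝ (fderiv ℝ Z) (α, s) (0, 1) (1, 0) = pd12 f α s :=
    second_symm f hf (α, s) _ _
  simpa [pd1, ← h3, Function.comp_def] using h2

lemma continuous_pd1 (f : ℝ → ℝ → ℝ)
    (hf : ContDiff ℝ 2 (fun p : ℝ × ℝ => f p.1 p.2)) :
    Continuous fun p : ℝ × ℝ => pd1 f p.1 p.2 := by
  have := ((hf.fderiv_right (m := 1) (by norm_num)).continuous).clm_apply
    (continuous_const (y := ((1 : ℝ), (0 : ℝ))))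
  simpa [pd1] using this

lemma continuous_pd2 (f : ℝ → ℝ → ℝ)
    (hf : ContDiff ℝ 2 (fun p : ℝ × ℝ => f p.1 p.2)) :
    Continuous fun p : ℝ × ℝ => pd2 f p.1 p.2 := by
  have := ((hf.fderiv_right (m := 1) (by norm_num)).continuous).clm_apply
    (continuous_const (y := ((0 : ℝ), (1 : ℝ))))
  simpa [pd2] using this

lemma continuous_pd12 (f : ℝ → ℝ → ℝ)
    (hf : ContDiff ℝ 2 (fun p : ℝ × ℝ => f p.1 p.2)) :
    Continuous fun p : ℝ × ℝ => pd12 f p.1 p.2 := by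
  have hc : Continuous (fderiv ℝ (fderiv ℝ (fun p : ℝ × ℝ => f p.1 p.2))) :=
    ((hf.fderiv_right (m := 1) (by norm_num)).fderiv_right (m := 0)
      (by norm_num)).continuous
  have := (hc.clm_apply (continuous_const (y := ((1 : ℝ), (0 : ℝ))))).clm_apply
    (continuous_const (y := ((0 : ℝ), (1 : ℝ))))
  simpa [pd12] using this

/-- Time derivative of the potential energy `(1/2)∫ z₂² ∂_α z₁ dα` of a horizontally
`2π`-periodic interface `z = (z₁, z₂)`: it equals `∫ z₂ (∂_t z · ∂_α z^⊥) dα`,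
where `(a,b)^⊥ = (−b,a)`. -/
theorem deriv_potential_energy (z₁ z₂ : ℝ → ℝ → ℝ)
    (h1 : ContDiff ℝ 2 (fun p : ℝ × ℝ => z₁ p.1 p.2))
    (h2 : ContDiff ℝ 2 (fun p : ℝ × ℝ => z₂ p.1 p.2))
    (hper1 : ∀ α t : ℝ, z₁ (α + 2 * π) t = z₁ α t + 2 * π)
    (hper2 : ∀ α t : ℝ, z₂ (α + 2 * π) t = z₂ α t) (t : ℝ) :
    HasDerivAt (fun s => (1 / 2) * ∫ α in (-π)..π, (z₂ α s) ^ 2 * deriv (fun a => z₁ a s) α)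
      (∫ α in (-π)..π, z₂ α t *
        (deriv (fun s => z₁ α s) t * (-(deriv (fun a => z₂ a t) α)) +
          deriv (fun s => z₂ α s) t * deriv (fun a => z₁ a t) α)) t := by
  have hd1 : Differentiable ℝ (fun p : ℝ × ℝ => z₁ p.1 p.2) := h1.differentiable two_ne_zero
  have hd2 : Differentiable ℝ (fun p : ℝ × ℝ => z₂ p.1 p.2) := h2.differentiable two_ne_zero
  have c2 : Continuous fun p : ℝ × ℝ => z₂ p.1 p.2 := h2.continuous
  have cP := continuous_pd1 z₁ h1
  have cQ := continuous_pd2 z₁ h1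
  have cA := continuous_pd1 z₂ h2
  have cB := continuous_pd2 z₂ h2
  have cR := continuous_pd12 z₁ h1
  -- continuity of the slice embeddings
  have emb : ∀ s : ℝ, Continuous fun α : ℝ => ((α, s) : ℝ × ℝ) :=
    fun s => continuous_id.prodMk continuous_const
  -- rewrite the function whose derivative we take
  have hfun : (fun s => (1 / 2 : ℝ) * ∫ α in (-π)..π, (z₂ α s) ^ 2 * deriv (fun a => z₁ a s) α)
      = fun s => (1 / 2 : ℝ) * ∫ α in (-π)..π, (z₂ α s) ^ 2 * pd1 z₁ α s := by
    funext s
    congr 1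
    refine intervalIntegral.integral_congr fun α _ => ?_
    rw [(hasDerivAt_pd1 z₁ hd1 α s).deriv]
  -- rewrite the claimed derivative value
  have hval : (∫ α in (-π)..π, z₂ α t *
        (deriv (fun s => z₁ α s) t * (-(deriv (fun a => z₂ a t) α)) +
          deriv (fun s => z₂ α s) t * deriv (fun a => z₁ a t) α))
      = ∫ α in (-π)..π, z₂ α t * (pd2 z₁ α t * (-(pd1 z₂ α t)) + pd2 z₂ α t * pd1 z₁ α t) := by
    refine intervalIntegral.integral_congr fun α _ => ?_
    rw [(hasDerivAt_pd2 z₁ hd1 α t).deriv, (hasDerivAt_pd1 z₂ hd2 α t).deriv,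
      (hasDerivAt_pd2 z₂ hd2 α t).deriv, (hasDerivAt_pd1 z₁ hd1 α t).deriv]
  rw [hfun, hval]
  -- differentiation under the integral sign
  have cF' : Continuous fun p : ℝ × ℝ =>
      2 * z₂ p.1 p.2 * pd2 z₂ p.1 p.2 * pd1 z₁ p.1 p.2 + z₂ p.1 p.2 ^ 2 * pd12 z₁ p.1 p.2 :=
    (((continuous_const.mul c2).mul cB).mul cP).add ((c2.pow 2).mul cR)
  have key : HasDerivAt (fun s => ∫ α in (-π)..π, (z₂ α s) ^ 2 * pd1 z₁ α s)
      (∫ α in (-π)..π,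
        (2 * z₂ α t * pd2 z₂ α t * pd1 z₁ α t + z₂ α t ^ 2 * pd12 z₁ α t)) t := by
    obtain ⟨C, hC⟩ := ((isCompact_uIcc (a := -π) (b := π)).prod
      (isCompact_closedBall t 1)).exists_bound_of_continuousOn
      (f := fun p : ℝ × ℝ =>
        2 * z₂ p.1 p.2 * pd2 z₂ p.1 p.2 * pd1 z₁ p.1 p.2 + z₂ p.1 p.2 ^ 2 * pd12 z₁ p.1 p.2)
      cF'.continuousOn
    have sliceCont : ∀ x : ℝ, Continuous fun α => (z₂ α x) ^ 2 * pd1 z₁ α x := fun x =>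
      ((c2.comp (emb x)).pow 2).mul (cP.comp (emb x))
    have sliceCont' : ∀ x : ℝ, Continuous fun α =>
        2 * z₂ α x * pd2 z₂ α x * pd1 z₁ α x + z₂ α x ^ 2 * pd12 z₁ α x := fun x =>
      cF'.comp (emb x)
    have h := intervalIntegral.hasDerivAt_integral_of_dominated_loc_of_deriv_le
      (F := fun s α => (z₂ α s) ^ 2 * pd1 z₁ α s)
      (F' := fun s α => 2 * z₂ α s * pd2 z₂ α s * pd1 z₁ α s + z₂ α s ^ 2 * pd12 z₁ α s)
      (bound := fun _ => C) (μ := volume) (a := -π) (b := π) (x₀ := t) (Metric.ball_mem_nhds t one_pos)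
      (Filter.Eventually.of_forall fun x => ((sliceCont x).aestronglyMeasurable))
      ((sliceCont t).intervalIntegrable _ _)
      ((sliceCont' t).aestronglyMeasurable)
      (Filter.Eventually.of_forall fun α hα x hx =>
        hC (α, x) ⟨Set.uIoc_subset_uIcc hα, Metric.ball_subset_closedBall hx⟩)
      (continuous_const.intervalIntegrable _ _)
      (Filter.Eventually.of_forall fun α hα x hx => by
        have ha : HasDerivAt (fun s => z₂ α s) (pd2 z₂ α x) x := hasDerivAt_pd2 z₂ hd2 α x
        have hp : HasDerivAt (fun s => pd1 z₁ α s) (pd12 z₁ α x) x := hasDerivAt_pd1_t z₁ h1 α x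
        have := (ha.pow 2).mul hp
        convert this using 1
        all_goals try rfl
        push_cast [Pi.pow_apply]
        ring)
    exact h.2
  -- integration by parts: the exact term integrates to zero
  have hIBP : (∫ α in (-π)..π,
      (z₂ α t * pd1 z₂ α t * pd2 z₁ α t + (1 / 2) * z₂ α t ^ 2 * pd12 z₁ α t)) = 0 := by
    have hg : ∀ α ∈ Set.uIcc (-π) π,
        HasDerivAt (fun a => (1 / 2 : ℝ) * z₂ a t ^ 2 * pd2 z₁ a t)
          (z₂ α t * pd1 z₂ α t * pd2 z₁ α t + (1 / 2) * z₂ α t ^ 2 * pd12 z₁ α t) α := by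
      intro α _
      have ha : HasDerivAt (fun a => z₂ a t) (pd1 z₂ α t) α := hasDerivAt_pd1 z₂ hd2 α t
      have hq : HasDerivAt (fun a => pd2 z₁ a t) (pd12 z₁ α t) α := hasDerivAt_pd2_a z₁ h1 α t
      have := (((ha.pow 2).const_mul (1 / 2 : ℝ)).mul hq)
      convert this using 1
      all_goals try rfl
      push_cast [Pi.pow_apply]
      ring
    have hint : IntervalIntegrable
        (fun α => z₂ α t * pd1 z₂ α t * pd2 z₁ α t + (1 / 2) * z₂ α t ^ 2 * pd12 z₁ α t)
        volume (-π) π := by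
      exact (((((c2.comp (emb t)).mul (cA.comp (emb t))).mul (cQ.comp (emb t))).add
        (((continuous_const.mul ((c2.comp (emb t)).pow 2))).mul
          (cR.comp (emb t)))).intervalIntegrable _ _)
    rw [intervalIntegral.integral_eq_sub_of_hasDerivAt hg hint]
    have e1 : z₂ π t = z₂ (-π) t := by
      have h := hper2 (-π) t
      rw [show -π + 2 * π = π by ring] at h
      exact h
    have e2 : pd2 z₁ π t = pd2 z₁ (-π) t := by
      have hfe : (fun s => z₁ (-π) s + 2 * π) = fun s => z₁ π s := by
        funext s
        rw [← hper1 (-π) s, show -π + 2 * π = π by ring]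
      have h' : HasDerivAt (fun s => z₁ π s) (pd2 z₁ (-π) t) t := by
        rw [← hfe]
        simpa using (hasDerivAt_pd2 z₁ hd1 (-π) t).add_const (2 * π)
      exact (hasDerivAt_pd2 z₁ hd1 π t).unique h'
    rw [e1, e2]
    ring
  -- combine
  have main := key.const_mul (1 / 2 : ℝ)
  convert main using 1
  all_goals try rfl
  rw [← intervalIntegral.integral_const_mul]
  have hsplit : (∫ α in (-π)..π,
      (1 / 2 : ℝ) * (2 * z₂ α t * pd2 z₂ α t * pd1 z₁ α t + z₂ α t ^ 2 * pd12 z₁ α t))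
      = ∫ α in (-π)..π,
        (z₂ α t * (pd2 z₁ α t * (-(pd1 z₂ α t)) + pd2 z₂ α t * pd1 z₁ α t)
          + (z₂ α t * pd1 z₂ α t * pd2 z₁ α t + (1 / 2) * z₂ α t ^ 2 * pd12 z₁ α t)) :=
    intervalIntegral.integral_congr fun α _ => by ring
  have hT : IntervalIntegrable
      (fun α => z₂ α t * (pd2 z₁ α t * (-(pd1 z₂ α t)) + pd2 z₂ α t * pd1 z₁ α t))
      volume (-π) π :=
    ((c2.comp (emb t)).mul
      ((((cQ.comp (emb t)).mul ((cA.comp (emb t)).neg))).add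
        ((cB.comp (emb t)).mul (cP.comp (emb t))))).intervalIntegrable _ _
  have hg' : IntervalIntegrable
      (fun α => z₂ α t * pd1 z₂ α t * pd2 z₁ α t + (1 / 2) * z₂ α t ^ 2 * pd12 z₁ α t)
      volume (-π) π :=
    ((((c2.comp (emb t)).mul (cA.comp (emb t))).mul (cQ.comp (emb t))).add
      ((continuous_const.mul ((c2.comp (emb t)).pow 2)).mul
        (cR.comp (emb t)))).intervalIntegrable _ _
  rw [hsplit, intervalIntegral.integral_add hT hg', hIBP, add_zero]
end

section
/- Let φ : ℝ → ℝ be a smooth, compactly supported function, and for δ > 0 set φ_δ(x) = δ⁻¹ φ(x/δ). There exists a constant C, depending only on φ, such that for every δ > 0, every continuously differentiable compactly supported f : ℝ → ℝ, and every bounded continuously differentiable g : ℝ → ℝ with bounded derivative, ‖ φ_δ * (f'·g) − g·(φ_δ * f') ‖_{L²(ℝ)} ≤ C · (sup_{x} |g'(x)|) · ‖f‖_{L²(ℝ)}. -/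
open Real MeasureTheory
open scoped ENNReal

/-- Convolution of two functions on `ℝ`. -/
noncomputable def convol (f g : ℝ → ℝ) (x : ℝ) : ℝ := ∫ y, f (x - y) * g y

namespace MollifierAux

lemma measurePreserving_const_sub (x : ℝ) :
    MeasurePreserving (fun y : ℝ => x - y) volume volume := by
  have h := (measurePreserving_add_left (volume : Measure ℝ) x).comp
    (Measure.measurePreserving_neg (volume : Measure ℝ))
  simpa [Function.comp_def, sub_eq_add_neg] using h

lemma lintegral_const_sub (h : ℝ → ℝ≥0∞) (hh : Measurable h) (x : ℝ) :
    ∫⁻ y, h (x - y) = ∫⁻ z, h z :=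
  (measurePreserving_const_sub x).lintegral_comp hh

lemma lintegral_sub_const (h : ℝ → ℝ≥0∞) (hh : Measurable h) (y : ℝ) :
    ∫⁻ x, h (x - y) = ∫⁻ z, h z :=
  (measurePreserving_sub_right (volume : Measure ℝ) y).lintegral_comp hh

/-- Schur-test / Young inequality for `p = 2`, `q = 1`, in `ℝ≥0∞` form. -/
lemma schur (h F : ℝ → ℝ≥0∞) (hh : Measurable h) (hF : Measurable F) :
    ∫⁻ x, (∫⁻ y, h (x - y) * F y) ^ (2:ℝ) ≤ (∫⁻ z, h z) ^ (2:ℝ) * ∫⁻ y, F y ^ (2:ℝ) := by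
  set A := ∫⁻ z, h z with hA
  have hmeas : Measurable (Function.uncurry fun x y : ℝ => h (x - y) * F y ^ (2:ℝ)) :=
    (hh.comp (measurable_fst.sub measurable_snd)).mul
      ((hF.comp measurable_snd).pow_const _)
  have key : ∀ x : ℝ, (∫⁻ y, h (x - y) * F y) ^ (2:ℝ)
      ≤ A * ∫⁻ y, h (x - y) * F y ^ (2:ℝ) := by
    intro x
    have hhx : Measurable fun y : ℝ => h (x - y) := hh.comp (measurable_const.sub measurable_id)
    have hid : ∀ y : ℝ, h (x - y) * F y
        = (h (x - y)) ^ ((2:ℝ)⁻¹) * ((h (x - y)) * F y ^ (2:ℝ)) ^ ((2:ℝ)⁻¹) := by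
      intro y
      rw [ENNReal.mul_rpow_of_nonneg _ _ (by norm_num), ← mul_assoc,
        ← ENNReal.rpow_add_of_nonneg _ _ (by norm_num) (by norm_num),
        ← ENNReal.rpow_mul]
      norm_num
    have hCS := ENNReal.lintegral_mul_norm_pow_le (μ := (volume : Measure ℝ))
      (f := fun y => h (x - y)) (g := fun y => h (x - y) * F y ^ (2:ℝ))
      hhx.aemeasurable (hhx.mul (hF.pow_const _)).aemeasurable
      (p := (2:ℝ)⁻¹) (q := (2:ℝ)⁻¹) (by norm_num) (by norm_num) (by norm_num)
    have h1 : ∫⁻ y, h (x - y) * F y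
        ≤ (∫⁻ y, h (x - y)) ^ ((2:ℝ)⁻¹) * (∫⁻ y, h (x - y) * F y ^ (2:ℝ)) ^ ((2:ℝ)⁻¹) := by
      calc ∫⁻ y, h (x - y) * F y
          = ∫⁻ y, (h (x - y)) ^ ((2:ℝ)⁻¹) * ((h (x - y)) * F y ^ (2:ℝ)) ^ ((2:ℝ)⁻¹) :=
            lintegral_congr fun y => hid y
        _ ≤ _ := hCS
    calc (∫⁻ y, h (x - y) * F y) ^ (2:ℝ)
        ≤ ((∫⁻ y, h (x - y)) ^ ((2:ℝ)⁻¹) * (∫⁻ y, h (x - y) * F y ^ (2:ℝ)) ^ ((2:ℝ)⁻¹)) ^ (2:ℝ) :=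
          ENNReal.rpow_le_rpow h1 (by norm_num)
      _ = (∫⁻ y, h (x - y)) * ∫⁻ y, h (x - y) * F y ^ (2:ℝ) := by
          rw [ENNReal.mul_rpow_of_nonneg _ _ (by norm_num), ← ENNReal.rpow_mul,
            ← ENNReal.rpow_mul]
          norm_num
      _ = A * ∫⁻ y, h (x - y) * F y ^ (2:ℝ) := by rw [lintegral_const_sub h hh x]
  calc ∫⁻ x, (∫⁻ y, h (x - y) * F y) ^ (2:ℝ)
      ≤ ∫⁻ x, A * ∫⁻ y, h (x - y) * F y ^ (2:ℝ) := lintegral_mono key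
    _ = A * ∫⁻ x, ∫⁻ y, h (x - y) * F y ^ (2:ℝ) :=
        lintegral_const_mul A hmeas.lintegral_prod_right
    _ = A * ∫⁻ y, ∫⁻ x, h (x - y) * F y ^ (2:ℝ) := by
        rw [lintegral_lintegral_swap hmeas.aemeasurable]
    _ = A * ∫⁻ y, F y ^ (2:ℝ) * A := by
        congr 1
        refine lintegral_congr fun y => ?_
        have hhy : Measurable fun x : ℝ => h (x - y) :=
          hh.comp (measurable_id.sub measurable_const)
        calc ∫⁻ x, h (x - y) * F y ^ (2:ℝ)
            = ∫⁻ x, F y ^ (2:ℝ) * h (x - y) := by simp [mul_comm]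
          _ = F y ^ (2:ℝ) * ∫⁻ x, h (x - y) := lintegral_const_mul _ hhy
          _ = F y ^ (2:ℝ) * A := by rw [lintegral_sub_const h hh y]
    _ = A ^ (2:ℝ) * ∫⁻ y, F y ^ (2:ℝ) := by
        rw [lintegral_mul_const _ (hF.pow_const _),
          show A ^ (2:ℝ) = A * A by
            rw [show (2:ℝ) = (1:ℝ) + 1 by norm_num,
              ENNReal.rpow_add_of_nonneg _ _ (by norm_num) (by norm_num), ENNReal.rpow_one]]
        ring

lemma integral_deriv_eq_zero' {F : ℝ → ℝ} (hF : ContDiff ℝ 1 F) (hFc : HasCompactSupport F) :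
    ∫ x, deriv F x = 0 := by
  have hint : Integrable (deriv F) volume :=
    (hF.continuous_deriv le_rfl).integrable_of_hasCompactSupport hFc.deriv
  have h := intervalIntegral.integral_Iic_add_Ioi (b := (0:ℝ)) (μ := volume)
    hint.integrableOn hint.integrableOn
  rw [← h, hFc.integral_Iic_deriv_eq hF 0, hFc.integral_Ioi_deriv_eq hF 0]
  ring

end MollifierAux

/-- Commutator estimate for mollifiers: with `φ_δ(x) = δ⁻¹ φ(x/δ)`, there is a constant
`C` depending only on `φ` with
`‖φ_δ * (f'·g) − g·(φ_δ * f')‖_{L²} ≤ C ‖g'‖_{L^∞} ‖f‖_{L²}`,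
uniformly in `δ > 0`, `f` and `g`. -/
theorem mollifier_commutator (φ : ℝ → ℝ) (hφ : ContDiff ℝ (⊤ : ℕ∞) φ)
    (hφc : HasCompactSupport φ) :
    ∃ C : ℝ, ∀ δ : ℝ, 0 < δ → ∀ f g : ℝ → ℝ,
      ContDiff ℝ 1 f → HasCompactSupport f →
      ContDiff ℝ 1 g → (∃ M : ℝ, ∀ x, |g x| ≤ M) →
      BddAbove (Set.range fun x => |deriv g x|) →
      eLpNorm (fun x => convol (fun y => δ⁻¹ * φ (y / δ)) (fun y => deriv f y * g y) x
          - g x * convol (fun y => δ⁻¹ * φ (y / δ)) (deriv f) x) 2 volume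
        ≤ ENNReal.ofReal (C * (⨆ x : ℝ, |deriv g x|)) * eLpNorm f 2 volume := by
  classical
  set ψ := deriv φ with hψdef
  have hφ1 : ContDiff ℝ 1 φ := hφ.of_le (mod_cast le_top)
  have hψcont : Continuous ψ := hφ.continuous_deriv (mod_cast le_top)
  have hψc : HasCompactSupport ψ := hφc.deriv
  set K : ℝ → ℝ := fun u => |ψ u| * |u| + |φ u| with hKdef
  have hKcont : Continuous K := ((hψcont.abs.mul continuous_abs)).add hφ.continuous.abs
  have hKc : HasCompactSupport K := by
    have h1 : HasCompactSupport fun u : ℝ => |ψ u| * |u| :=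
      HasCompactSupport.mul_right (f' := fun u : ℝ => |u|) hψc.abs
    exact h1.add hφc.abs
  have hK0 : ∀ u, 0 ≤ K u := fun u => by positivity
  refine ⟨∫ u, K u, ?_⟩
  intro δ hδ f g hf hfc hg hgb hgd
  set L := ⨆ x : ℝ, |deriv g x| with hLdef
  have hgL : ∀ x, |deriv g x| ≤ L := fun x => le_ciSup hgd x
  have hL0 : 0 ≤ L := le_trans (abs_nonneg _) (hgL 0)
  have hglip : ∀ x y : ℝ, |g y - g x| ≤ L * |y - x| := by
    have hlip : LipschitzWith ⟨L, hL0⟩ g := by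
      refine lipschitzWith_of_nnnorm_deriv_le (hg.differentiable one_ne_zero) fun x => ?_
      refine NNReal.coe_le_coe.mp ?_
      show ((‖deriv g x‖₊ : ℝ)) ≤ L
      simpa using hgL x
    intro x y
    have : dist (g y) (g x) ≤ L * dist y x := hlip.dist_le_mul y x
    simpa [Real.dist_eq] using this
  set C := ∫ u, K u with hCdef
  have hC0 : 0 ≤ C := integral_nonneg hK0
  set hker : ℝ → ℝ≥0∞ := fun z => ENNReal.ofReal (L * (δ⁻¹ * K (z / δ))) with hkerdef
  have hkermeas : Measurable hker :=
    ((continuous_const.mul (continuous_const.mul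
      (hKcont.comp (continuous_id.div_const δ)))).measurable).ennreal_ofReal
  have hFmeas : Measurable fun y : ℝ => (‖f y‖₊ : ℝ≥0∞) :=
    hf.continuous.measurable.nnnorm.coe_nnreal_ennreal
  -- total mass of the kernel
  have hKdil_int : Integrable (fun z : ℝ => K (z / δ)) volume := by
    refine Continuous.integrable_of_hasCompactSupport
      (hKcont.comp (continuous_id.div_const δ)) ?_
    have := hKc.comp_homeomorph (Homeomorph.mulRight₀ δ⁻¹ (by positivity))
    simpa [div_eq_mul_inv, Function.comp_def] using this
  have hker_int : Integrable (fun z : ℝ => L * (δ⁻¹ * K (z / δ))) volume :=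
    (hKdil_int.const_mul δ⁻¹).const_mul L
  have hmass : ∫⁻ z, hker z = ENNReal.ofReal (C * L) := by
    rw [hkerdef, ← ofReal_integral_eq_lintegral_ofReal hker_int
      (Filter.Eventually.of_forall fun z => by positivity)]
    congr 1
    rw [integral_const_mul, integral_const_mul, Measure.integral_comp_div K δ,
      abs_of_pos hδ, smul_eq_mul, ← hCdef]
    field_simp
  -- pointwise bound on the commutator
  have hf' : Continuous (deriv f) := hf.continuous_deriv le_rfl
  have hg' : Continuous (deriv g) := hg.continuous_deriv le_rfl
  have hcomm_le : ∀ x : ℝ,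
      (‖convol (fun y => δ⁻¹ * φ (y / δ)) (fun y => deriv f y * g y) x
          - g x * convol (fun y => δ⁻¹ * φ (y / δ)) (deriv f) x‖₊ : ℝ≥0∞)
        ≤ ∫⁻ y, hker (x - y) * ‖f y‖₊ := by
    intro x
    have hcont_aff : Continuous fun y : ℝ => (x - y) / δ :=
      (continuous_const.sub continuous_id).div_const δ
    have hφδ : Continuous fun y : ℝ => δ⁻¹ * φ ((x - y) / δ) :=
      continuous_const.mul (hφ.continuous.comp hcont_aff)
    set v : ℝ → ℝ := fun y => δ⁻¹ * φ ((x - y) / δ) * (g y - g x) with hvdef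
    set w : ℝ → ℝ := fun y =>
      δ⁻¹ * (ψ ((x - y) / δ) * (-1 / δ)) * (g y - g x)
        + δ⁻¹ * φ ((x - y) / δ) * deriv g y with hwdef
    have hva : ∀ y : ℝ, HasDerivAt v (w y) y := by
      intro y
      have h0 : HasDerivAt (fun y : ℝ => (x - y) / δ) (-1 / δ) y :=
        ((hasDerivAt_id y).const_sub x).div_const δ
      have h1 : HasDerivAt (fun y : ℝ => φ ((x - y) / δ)) (ψ ((x - y) / δ) * (-1 / δ)) y :=
        HasDerivAt.comp y ((hφ.differentiable (by simp) _).hasDerivAt) h0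
      have h2 := h1.const_mul δ⁻¹
      have h3 : HasDerivAt (fun y : ℝ => g y - g x) (deriv g y) y :=
        ((hg.differentiable one_ne_zero y).hasDerivAt).sub_const (g x)
      exact h2.mul h3
    have hvcd : ContDiff ℝ 1 v :=
      (contDiff_const.mul (hφ1.comp ((contDiff_const.sub contDiff_id).div_const δ))).mul
        (hg.sub contDiff_const)
    have hwcont : Continuous w :=
      ((continuous_const.mul ((hψcont.comp hcont_aff).mul continuous_const)).mul
        (hg.continuous.sub continuous_const)).add
        ((continuous_const.mul (hφ.continuous.comp hcont_aff)).mul hg')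
    have hfvc : HasCompactSupport fun y => f y * v y := hfc.mul_right
    have hIBP0 : ∫ y, deriv (fun y => f y * v y) y = 0 :=
      MollifierAux.integral_deriv_eq_zero' (hf.mul hvcd) hfvc
    have hderiv_eq : (fun y => deriv (fun y => f y * v y) y)
        = fun y => deriv f y * v y + f y * w y :=
      funext fun y => (((hf.differentiable one_ne_zero y).hasDerivAt).mul (hva y)).deriv
    have hint_fv : Integrable (fun y => deriv f y * v y) volume :=
      Continuous.integrable_of_hasCompactSupport (hf'.mul hvcd.continuous)
        ((hfc.deriv).mul_right)
    have hint_fw : Integrable (fun y => f y * w y) volume :=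
      Continuous.integrable_of_hasCompactSupport (hf.continuous.mul hwcont) (hfc.mul_right)
    have hIBP : ∫ y, deriv f y * v y = - ∫ y, f y * w y := by
      rw [hderiv_eq, integral_add hint_fv hint_fw] at hIBP0
      linarith
    have hTint1 : Integrable (fun y => δ⁻¹ * φ ((x - y) / δ) * (deriv f y * g y)) volume :=
      Continuous.integrable_of_hasCompactSupport (hφδ.mul (hf'.mul hg.continuous))
        (HasCompactSupport.mul_left ((hfc.deriv).mul_right))
    have hTint2 : Integrable (fun y => δ⁻¹ * φ ((x - y) / δ) * deriv f y) volume :=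
      Continuous.integrable_of_hasCompactSupport (hφδ.mul hf')
        (HasCompactSupport.mul_left (hfc.deriv))
    have hcommx : convol (fun y => δ⁻¹ * φ (y / δ)) (fun y => deriv f y * g y) x
        - g x * convol (fun y => δ⁻¹ * φ (y / δ)) (deriv f) x = - ∫ y, f y * w y := by
      calc convol (fun y => δ⁻¹ * φ (y / δ)) (fun y => deriv f y * g y) x
            - g x * convol (fun y => δ⁻¹ * φ (y / δ)) (deriv f) x
          = ∫ y, (δ⁻¹ * φ ((x - y) / δ) * (deriv f y * g y)
              - g x * (δ⁻¹ * φ ((x - y) / δ) * deriv f y)) := by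
            rw [convol, convol, ← integral_const_mul,
              ← integral_sub hTint1 (hTint2.const_mul (g x))]
        _ = ∫ y, deriv f y * v y := by
            refine integral_congr_ae (Filter.Eventually.of_forall fun y => ?_)
            simp only [hvdef]
            ring
        _ = - ∫ y, f y * w y := hIBP
    -- bound |w|
    have hwb : ∀ y : ℝ, |w y| ≤ L * (δ⁻¹ * K ((x - y) / δ)) := by
      intro y
      have hδi : (0:ℝ) < δ⁻¹ := inv_pos.2 hδ
      have habsu : |(x - y) / δ| = δ⁻¹ * |y - x| := by
        rw [abs_div, abs_of_pos hδ, abs_sub_comm]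
        ring
      have h1 : |δ⁻¹ * (ψ ((x - y) / δ) * (-1 / δ)) * (g y - g x)|
          ≤ δ⁻¹ * |ψ ((x - y) / δ)| * δ⁻¹ * (L * |y - x|) := by
        have e1 : |δ⁻¹ * (ψ ((x - y) / δ) * (-1 / δ)) * (g y - g x)|
            = δ⁻¹ * |ψ ((x - y) / δ)| * δ⁻¹ * |g y - g x| := by
          rw [abs_mul, abs_mul, abs_mul, abs_div, abs_neg, abs_one, abs_of_pos hδi,
            abs_of_pos hδ]
          ring
        rw [e1]
        exact mul_le_mul_of_nonneg_left (hglip x y) (by positivity)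
      have h2 : |δ⁻¹ * φ ((x - y) / δ) * deriv g y| ≤ δ⁻¹ * |φ ((x - y) / δ)| * L := by
        rw [abs_mul, abs_mul, abs_of_pos hδi]
        exact mul_le_mul_of_nonneg_left (hgL y) (by positivity)
      calc |w y| ≤ |δ⁻¹ * (ψ ((x - y) / δ) * (-1 / δ)) * (g y - g x)|
            + |δ⁻¹ * φ ((x - y) / δ) * deriv g y| := abs_add_le _ _
        _ ≤ δ⁻¹ * |ψ ((x - y) / δ)| * δ⁻¹ * (L * |y - x|)
            + δ⁻¹ * |φ ((x - y) / δ)| * L := add_le_add h1 h2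
        _ = L * (δ⁻¹ * K ((x - y) / δ)) := by
            rw [hKdef]
            have : δ⁻¹ * |y - x| = |(x - y) / δ| := habsu.symm
            rw [show δ⁻¹ * |ψ ((x - y) / δ)| * δ⁻¹ * (L * |y - x|)
                = L * (δ⁻¹ * (|ψ ((x - y) / δ)| * (δ⁻¹ * |y - x|))) by ring, ← habsu]
            ring
    rw [hcommx]
    calc (‖-∫ y, f y * w y‖₊ : ℝ≥0∞) = ‖∫ y, f y * w y‖₊ := by rw [nnnorm_neg]
      _ ≤ ∫⁻ y, ‖f y * w y‖₊ := enorm_integral_le_lintegral_enorm _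
      _ ≤ ∫⁻ y, hker (x - y) * ‖f y‖₊ := by
          refine lintegral_mono fun y => ?_
          rw [← enorm_eq_nnnorm, ← enorm_eq_nnnorm, Real.enorm_eq_ofReal_abs, Real.enorm_eq_ofReal_abs, hkerdef,
            ← ENNReal.ofReal_mul (by positivity)]
          refine ENNReal.ofReal_le_ofReal ?_
          rw [abs_mul, mul_comm]
          exact mul_le_mul_of_nonneg_right (hwb y) (abs_nonneg _)
  -- assemble
  rw [eLpNorm_eq_lintegral_rpow_enorm_toReal (by norm_num) (by norm_num),
    eLpNorm_eq_lintegral_rpow_enorm_toReal (by norm_num) (by norm_num)]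
  simp only [ENNReal.toReal_ofNat, enorm_eq_nnnorm]
  have hmain : ∫⁻ x, (‖convol (fun y => δ⁻¹ * φ (y / δ)) (fun y => deriv f y * g y) x
          - g x * convol (fun y => δ⁻¹ * φ (y / δ)) (deriv f) x‖₊ : ℝ≥0∞) ^ (2:ℝ)
      ≤ (ENNReal.ofReal (C * L)) ^ (2:ℝ) * ∫⁻ y, (‖f y‖₊ : ℝ≥0∞) ^ (2:ℝ) := by
    calc ∫⁻ x, (‖convol (fun y => δ⁻¹ * φ (y / δ)) (fun y => deriv f y * g y) x
            - g x * convol (fun y => δ⁻¹ * φ (y / δ)) (deriv f) x‖₊ : ℝ≥0∞) ^ (2:ℝ)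
        ≤ ∫⁻ x, (∫⁻ y, hker (x - y) * ‖f y‖₊) ^ (2:ℝ) :=
          lintegral_mono fun x => ENNReal.rpow_le_rpow (hcomm_le x) (by norm_num)
      _ ≤ (∫⁻ z, hker z) ^ (2:ℝ) * ∫⁻ y, (‖f y‖₊ : ℝ≥0∞) ^ (2:ℝ) :=
          MollifierAux.schur hker _ hkermeas hFmeas
      _ = _ := by rw [hmass]
  calc (∫⁻ x, (‖convol (fun y => δ⁻¹ * φ (y / δ)) (fun y => deriv f y * g y) x
          - g x * convol (fun y => δ⁻¹ * φ (y / δ)) (deriv f) x‖₊ : ℝ≥0∞) ^ (2:ℝ)) ^ ((1:ℝ)/2)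
      ≤ ((ENNReal.ofReal (C * L)) ^ (2:ℝ) * ∫⁻ y, (‖f y‖₊ : ℝ≥0∞) ^ (2:ℝ)) ^ ((1:ℝ)/2) :=
        ENNReal.rpow_le_rpow hmain (by norm_num)
    _ = ENNReal.ofReal (C * L) * (∫⁻ y, (‖f y‖₊ : ℝ≥0∞) ^ (2:ℝ)) ^ ((1:ℝ)/2) := by
        rw [ENNReal.mul_rpow_of_nonneg _ _ (by norm_num), ← ENNReal.rpow_mul]
        norm_num
end

section
/- Let z : ℝ → ℝ² be twice continuously differentiable with z(α) − (α, 0) 2π-periodic, suppose its arc-chord constant F = sup_{α ∈ ℝ, 0 < |β| ≤ π} |β| / |z(α) − z(α−β)| is finite, and set M = sup_α |z'(α)| + sup_α |z''(α)|. Define, for α ∈ ℝ and 0 < |β| < π, C₁(α,β) = (z(α) − z(α−β))^⊥ / |z(α) − z(α−β)|² − z'(α)^⊥ / ( 2 |z'(α)|² tan(β/2) ). Then there exist universal constants C > 0 and j > 0, independent of z, such that |C₁(α,β)| ≤ C (1 + F)^j (1 + M)^j for all such α, β. -/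
set_option maxHeartbeats 1000000

open Real

private lemma tan_sub_le_sq {x : ℝ} (hx : |x| ≤ 1/2) : |Real.tan x - x| ≤ x^2 := by
  have key : ∀ y : ℝ, 0 ≤ y → y ≤ 1/2 → |Real.tan y - y| ≤ y^2 := by
    intro y hy0 hy2
    rcases eq_or_lt_of_le hy0 with h | h
    · simp [← h]
    have hπ : (3:ℝ) < π := by linarith [Real.pi_gt_three]
    have hyπ : y < π/2 := by linarith
    have hlb : y < Real.tan y := Real.lt_tan h hyπ
    have hcos : 0 < Real.cos y := Real.cos_pos_of_mem_Ioo ⟨by linarith, hyπ⟩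
    have hcos2 : 1 - y^2/2 < Real.cos y := Real.one_sub_sq_div_two_lt_cos (ne_of_gt h)
    have hsin : Real.sin y < y := Real.sin_lt h
    rw [abs_of_nonneg (by linarith)]
    have hdiv : Real.sin y / Real.cos y ≤ y^2 + y := by
      rw [div_le_iff₀ hcos]
      have hpoly : y ≤ (y^2+y)*(1-y^2/2) := by
        nlinarith [mul_nonneg (sq_nonneg y) (show (0:ℝ) ≤ 1/2 - y by linarith),
          mul_nonneg (sq_nonneg y) (show (0:ℝ) ≤ 1/4 - y^2 by nlinarith)]
      have hmul := mul_lt_mul_of_pos_left hcos2 (show (0:ℝ) < y^2+y by positivity)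
      linarith
    rw [Real.tan_eq_sin_div_cos]; linarith
  rcases le_total 0 x with h | h
  · exact key x h (by rwa [abs_of_nonneg h] at hx)
  · have h2 := key (-x) (by linarith) (by rwa [abs_of_nonpos h] at hx)
    rw [Real.tan_neg, show -Real.tan x - -x = -(Real.tan x - x) by ring, abs_neg] at h2
    simpa using h2

private lemma abs_le_abs_tan {x : ℝ} (hx : |x| < π/2) : |x| ≤ |Real.tan x| := by
  have key : ∀ y : ℝ, 0 ≤ y → y < π/2 → y ≤ |Real.tan y| := by
    intro y hy0 hyπ
    rcases eq_or_lt_of_le hy0 with h | h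
    · simp [← h]
    have := Real.lt_tan h hyπ
    calc y ≤ Real.tan y := this.le
      _ ≤ |Real.tan y| := le_abs_self _
  rcases le_total 0 x with h | h
  · rw [abs_of_nonneg h] at hx ⊢; exact key x h hx
  · rw [abs_of_nonpos h] at hx ⊢
    have := key (-x) (by linarith) hx
    rwa [Real.tan_neg, abs_neg] at this

/-- The kernel `C₁` of the paper's Appendix: the difference between the Birkhoff–Rott
kernel of the curve `z` (identifying `ℝ²` with `ℂ`, with `w^⊥ = I·w`) and the cotangent
kernel of the periodic Hilbert transform. It is bounded in terms of the arc-chord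
constant `F` and the `C²` size `M = M₁ + M₂` of `z`, with universal constants `C, j`. -/
theorem birkhoffRott_kernel_bound :
    ∃ (C : ℝ) (j : ℕ), 0 < C ∧ 0 < j ∧
      ∀ (z : ℝ → ℂ) (F M₁ M₂ : ℝ),
        ContDiff ℝ 2 z →
        Function.Periodic (fun α : ℝ => z α - α) (2 * π) →
        (∀ α β : ℝ, 0 < |β| → |β| ≤ π → |β| ≤ F * ‖z α - z (α - β)‖) →
        (∀ α : ℝ, ‖deriv z α‖ ≤ M₁) →
        (∀ α : ℝ, ‖deriv (deriv z) α‖ ≤ M₂) →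
        ∀ α β : ℝ, 0 < |β| → |β| < π →
          ‖(Complex.I * (z α - z (α - β)) /
                  ((‖z α - z (α - β)‖ ^ 2 : ℝ) : ℂ) -
                Complex.I * deriv z α /
                  ((2 * ‖deriv z α‖ ^ 2 * Real.tan (β / 2) : ℝ) : ℂ))‖
            ≤ C * (1 + F) ^ j * (1 + (M₁ + M₂)) ^ j := by
  refine ⟨2, 2, by norm_num, by norm_num, ?_⟩
  intro z F M₁ M₂ hz _hper harc hM₁ hM₂ α β hβ0 hβπ
  have hπ : (3:ℝ) < π := by linarith [Real.pi_gt_three]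
  have hM₁0 : 0 ≤ M₁ := le_trans (norm_nonneg _) (hM₁ α)
  have hM₂0 : 0 ≤ M₂ := le_trans (norm_nonneg _) (hM₂ α)
  have hz1 : Differentiable ℝ z := hz.differentiable (by norm_num)
  have hz2 : Differentiable ℝ (deriv z) := by
    have h2 : ContDiff ℝ ((1:WithTop ℕ∞) + 1) z := by exact_mod_cast hz
    exact ((contDiff_succ_iff_deriv.mp h2).2.2).differentiable one_ne_zero
  set u := deriv z α with hudef
  -- Lipschitz bound for deriv z
  have lip : ∀ x : ℝ, ‖deriv z x - u‖ ≤ M₂ * |x - α| := by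
    intro x
    have := Convex.norm_image_sub_le_of_norm_deriv_le (f := deriv z) (s := Set.univ)
      (fun y _ => hz2 y) (fun y _ => by simpa using hM₂ y)
      convex_univ (Set.mem_univ α) (Set.mem_univ x)
    simpa [Real.norm_eq_abs] using this
  -- Taylor estimate
  have htaylor : ∀ γ : ℝ, ‖z α - z (α - γ) - (γ:ℂ) * u‖ ≤ M₂ * γ^2 := by
    intro γ
    set s := Set.uIcc α (α - γ) with hs
    have hg : ∀ x ∈ s, HasDerivWithinAt (fun y => z y - y • u) (deriv z x - u) s x := by
      intro x _
      exact ((hz1 x).hasDerivAt.sub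
        (by simpa using (hasDerivAt_id x).smul_const u)).hasDerivWithinAt
    have bound : ∀ x ∈ s, ‖deriv z x - u‖ ≤ M₂ * |γ| := by
      intro x hx
      have hxd : |x - α| ≤ |γ| := by
        rcases Set.mem_uIcc.mp hx with ⟨h1, h2⟩ | ⟨h1, h2⟩ <;>
          rw [abs_le] <;> constructor <;>
          nlinarith [le_abs_self γ, neg_abs_le γ]
      exact le_trans (lip x) (mul_le_mul_of_nonneg_left hxd hM₂0)
    have key := Convex.norm_image_sub_le_of_norm_hasDerivWithin_le hg bound
      (convex_uIcc _ _) Set.left_mem_uIcc Set.right_mem_uIcc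
    have heq : ‖z α - z (α - γ) - (γ:ℂ) * u‖
        = ‖(z (α - γ) - (α - γ) • u) - (z α - α • u)‖ := by
      rw [← norm_neg]
      congr 1
      simp only [Complex.real_smul]
      push_cast
      ring
    rw [heq]
    calc ‖(z (α - γ) - (α - γ) • u) - (z α - α • u)‖ ≤ M₂ * |γ| * ‖(α - γ) - α‖ := key
      _ = M₂ * γ^2 := by
          rw [Real.norm_eq_abs, show α - γ - α = -γ by ring, abs_neg, mul_assoc, ← sq, sq_abs]
  set Δ := z α - z (α - β) with hΔdef
  set t := Real.tan (β/2) with htdef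
  have harcβ : |β| ≤ F * ‖Δ‖ := harc α β hβ0 hβπ.le
  have hΔpos : 0 < ‖Δ‖ := by
    rcases eq_or_lt_of_le (norm_nonneg Δ) with h | h
    · rw [← h, mul_zero] at harcβ; linarith
    · exact h
  have hF : 0 < F := by nlinarith
  have hΔ0 : Δ ≠ 0 := norm_pos_iff.mp hΔpos
  -- lower bound on |u|
  have hu_lb : 1/F ≤ ‖u‖ := by
    refine le_of_forall_pos_le_add ?_
    intro ε hε
    set γ := min π (ε/(M₂+1)) with hγ
    have hγ0 : 0 < γ := lt_min Real.pi_pos (by positivity)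
    have h1 : |γ| ≤ F * ‖z α - z (α - γ)‖ :=
      harc α γ (by rwa [abs_of_pos hγ0]) (by rw [abs_of_pos hγ0]; exact min_le_left _ _)
    have h2 := htaylor γ
    have h3 : ‖z α - z (α - γ)‖ ≤ M₂ * γ^2 + γ * ‖u‖ := by
      have h4 := norm_add_le (z α - z (α - γ) - (γ:ℂ) * u) ((γ:ℂ) * u)
      rw [sub_add_cancel] at h4
      have h5 : ‖(γ:ℂ) * u‖ = γ * ‖u‖ := by
        rw [norm_mul, Complex.norm_real, Real.norm_eq_abs, abs_of_pos hγ0]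
      linarith
    have h6 : 1 ≤ F * (M₂ * γ + ‖u‖) := by
      have h7 : γ ≤ F * (M₂ * γ^2 + γ * ‖u‖) := by
        rw [abs_of_pos hγ0] at h1
        exact le_trans h1 (mul_le_mul_of_nonneg_left h3 hF.le)
      nlinarith
    have h8 : 1/F ≤ M₂ * γ + ‖u‖ := by
      rw [div_le_iff₀ hF]; nlinarith
    have h9 : M₂ * γ ≤ ε := by
      have hγ2 : γ ≤ ε/(M₂+1) := min_le_right _ _
      calc M₂ * γ ≤ (M₂+1) * γ := by nlinarith
        _ ≤ (M₂+1) * (ε/(M₂+1)) := mul_le_mul_of_nonneg_left hγ2 (by positivity)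
        _ = ε := by field_simp
    linarith
  have hupos : 0 < ‖u‖ := lt_of_lt_of_le (by positivity) hu_lb
  have hu0 : u ≠ 0 := norm_pos_iff.mp hupos
  have e1 : 1 ≤ F * ‖u‖ := by
    calc (1:ℝ) = F * (1/F) := by field_simp
      _ ≤ F * ‖u‖ := mul_le_mul_of_nonneg_left hu_lb hF.le
  -- tan facts
  have ht_lb : |β|/2 ≤ |t| := by
    have hβ2 : |β/2| < π/2 := by rw [abs_div, abs_two]; linarith
    have := abs_le_abs_tan hβ2
    rwa [abs_div, abs_two] at this
  have htabs : 0 < |t| := by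
    have : 0 < |β|/2 := by linarith
    linarith
  have ht0 : t ≠ 0 := abs_pos.mp htabs
  -- algebraic identity
  have habsΔ : ((‖Δ‖ ^ 2 : ℝ) : ℂ) = Δ * (starRingEnd ℂ) Δ := by
    rw [Complex.sq_norm, Complex.mul_conj]
  set a : ℂ := (starRingEnd ℂ) Δ with hadef
  set b : ℂ := ((2*t:ℝ):ℂ) * (starRingEnd ℂ) u with hbdef
  have habsu : ((2 * ‖u‖ ^ 2 * t : ℝ) : ℂ) = u * b := by
    rw [hbdef]
    calc ((2 * ‖u‖ ^ 2 * t : ℝ) : ℂ)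
        = 2 * ((Complex.normSq u : ℝ) : ℂ) * (t:ℝ) := by push_cast [Complex.sq_norm]; ring
      _ = u * (((2*t:ℝ):ℂ) * (starRingEnd ℂ) u) := by rw [← Complex.mul_conj]; push_cast; ring
  have ha0 : a ≠ 0 := by simp [hadef, hΔ0]
  have hb0 : b ≠ 0 := by
    apply mul_ne_zero
    · exact_mod_cast mul_ne_zero two_ne_zero ht0
    · simp [hu0]
  have hE : Complex.I * Δ / ((‖Δ‖ ^ 2 : ℝ) : ℂ)
      - Complex.I * u / ((2 * ‖u‖ ^ 2 * t : ℝ) : ℂ)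
      = Complex.I * (b - a) / (a * b) := by
    rw [habsΔ, habsu, hadef]
    have hc : (starRingEnd ℂ) Δ ≠ 0 := map_ne_zero _ |>.mpr hΔ0
    field_simp
  have habsE : ‖Complex.I * Δ / ((‖Δ‖ ^ 2 : ℝ) : ℂ)
      - Complex.I * u / ((2 * ‖u‖ ^ 2 * t : ℝ) : ℂ)‖
      = ‖b - a‖ / (‖a‖ * ‖b‖) := by
    rw [hE, norm_div, norm_mul, norm_mul, Complex.norm_I, one_mul]
  have haa : ‖a‖ = ‖Δ‖ := Complex.norm_conj Δ
  have hbb : ‖b‖ = 2 * |t| * ‖u‖ := by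
    rw [hbdef, norm_mul, Complex.norm_real, Real.norm_eq_abs, Complex.norm_conj, abs_mul, abs_two]
  have hba : ‖b - a‖ = ‖((2*t:ℝ):ℂ) * u - Δ‖ := by
    have hconj : (starRingEnd ℂ) (((2*t:ℝ):ℂ) * u - Δ) = b - a := by
      rw [map_sub, map_mul, Complex.conj_ofReal]
    rw [← hconj, Complex.norm_conj]
  rw [habsE, haa, hbb, hba]
  have hDpos : 0 < ‖Δ‖ * (2 * |t| * ‖u‖) := by positivity
  rw [div_le_iff₀ hDpos]
  set D1 := ‖Δ‖
  set D2 := |t|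
  set D3 := ‖u‖
  rcases le_or_gt |β| 1 with hsmall | hbig
  · -- small β
    have htan : |2*t - β| ≤ β^2/2 := by
      have h := tan_sub_le_sq (x := β/2) (by rw [abs_div, abs_two]; linarith)
      calc |2*t - β| = 2 * |t - β/2| := by
            rw [show 2*t - β = 2*(t - β/2) by ring, abs_mul, abs_two]
        _ ≤ 2 * (β/2)^2 := by linarith
        _ = β^2/2 := by ring
    have hN : ‖((2*t:ℝ):ℂ) * u - Δ‖ ≤ β^2 * (M₁ + M₂) := by
      have h1 : ‖((2*t:ℝ):ℂ) * u - (β:ℂ) * u‖ ≤ |2*t - β| * M₁ := by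
        have : ((2*t:ℝ):ℂ) * u - (β:ℂ) * u = ((2*t - β : ℝ):ℂ) * u := by push_cast; ring
        rw [this, norm_mul, Complex.norm_real, Real.norm_eq_abs]
        exact mul_le_mul_of_nonneg_left (hM₁ α) (abs_nonneg _)
      have h2 : ‖(β:ℂ) * u - Δ‖ ≤ M₂ * β^2 := by
        have : (β:ℂ) * u - Δ = -(z α - z (α - β) - (β:ℂ) * u) := by rw [hΔdef]; ring
        rw [this, norm_neg]
        exact htaylor β
      have h3 := norm_sub_le_norm_sub_add_norm_sub (((2*t:ℝ):ℂ) * u) ((β:ℂ) * u) Δ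
      nlinarith [abs_nonneg (2*t - β), sq_nonneg β]
    have s1 : |β| * |β| ≤ (F * D1) * (2 * D2) := by
      have h2' : |β| ≤ 2 * D2 := by linarith
      exact mul_le_mul harcβ h2' (abs_nonneg β)
        (mul_nonneg hF.le (norm_nonneg _))
    have s2 : |β| * |β| * (M₁ + M₂) ≤ (F * D1) * (2 * D2) * ((M₁ + M₂) * (F * D3)) := by
      have s3 : M₁ + M₂ ≤ (M₁ + M₂) * (F * D3) := le_mul_of_one_le_right (by linarith) e1
      exact mul_le_mul s1 s3 (by positivity)
        (mul_nonneg (mul_nonneg hF.le (norm_nonneg _)) (by positivity))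
    have hKF : F^2 * (M₁ + M₂) ≤ 2 * (1+F)^2 * (1+(M₁+M₂))^2 := by
      have a1 : F^2 ≤ (1+F)^2 := by nlinarith
      have a2 : (M₁+M₂) ≤ (1+(M₁+M₂))^2 := by nlinarith [sq_nonneg (M₁+M₂)]
      have a3 := mul_le_mul a1 a2 (by linarith) (by positivity)
      nlinarith [a3]
    calc ‖((2*t:ℝ):ℂ) * u - Δ‖ ≤ β^2 * (M₁ + M₂) := hN
      _ = |β| * |β| * (M₁ + M₂) := by rw [abs_mul_abs_self]; ring
      _ ≤ (F * D1) * (2 * D2) * ((M₁ + M₂) * (F * D3)) := s2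
      _ = (F^2 * (M₁ + M₂)) * (D1 * (2 * D2 * D3)) := by ring
      _ ≤ (2 * (1+F)^2 * (1+(M₁+M₂))^2) * (D1 * (2 * D2 * D3)) :=
          mul_le_mul_of_nonneg_right hKF (by positivity)
  · -- big β
    have e2 : 1 ≤ 2 * D2 := by linarith
    have e3 : 1 ≤ F * D1 := le_trans hbig.le harcβ
    have habs : ‖b - a‖ ≤ D1 + 2 * D2 * D3 := by
      have h := norm_sub_le_norm_sub_add_norm_sub b 0 a
      simp only [sub_zero, zero_sub, norm_neg] at h
      rw [haa] at h; rw [hbb] at h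
      rw [hba] at h
      linarith
    have hK2F : 2 * F ≤ 2 * (1+F)^2 * (1+(M₁+M₂))^2 := by
      nlinarith [sq_nonneg F, add_nonneg hM₁0 hM₂0, sq_nonneg (1+(M₁+M₂)),
        mul_nonneg hF.le (add_nonneg hM₁0 hM₂0)]
    have r : 1 ≤ (2 * D2) * (F * D3) := by nlinarith
    have q1 : D1 ≤ D1 * ((2 * D2) * (F * D3)) :=
      le_mul_of_one_le_right (norm_nonneg _) r
    have q2 : 2 * D2 * D3 ≤ (2 * D2 * D3) * (F * D1) :=
      le_mul_of_one_le_right (by positivity) e3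
    calc ‖((2*t:ℝ):ℂ) * u - Δ‖ ≤ D1 + 2 * D2 * D3 := by rw [← hba]; exact habs
      _ ≤ D1 * ((2 * D2) * (F * D3)) + (2 * D2 * D3) * (F * D1) := by linarith
      _ = (2 * F) * (D1 * (2 * D2 * D3)) := by ring
      _ ≤ (2 * (1+F)^2 * (1+(M₁+M₂))^2) * (D1 * (2 * D2 * D3)) :=
          mul_le_mul_of_nonneg_right hK2F (by positivity)
end

section
/- Let z, W : ℝ × ℝ → ℝ² be twice continuously differentiable with z(α+2π, t) = z(α,t) + (2π,0), W(α+2π, t) = W(α,t), and ∂_α z(α,t) ≠ 0 for all α, t. Define c(α,t) = ((α+π)/(2π)) ∫_{−π}^{π} ∂_β W(β,t) · ∂_β z(β,t) / |∂_β z(β,t)|² dβ − ∫_{−π}^{α} ∂_β W(β,t) · ∂_β z(β,t) / |∂_β z(β,t)|² dβ. If ∂_t z(α,t) = W(α,t) + c(α,t) ∂_α z(α,t) for all α, t, then ∂_t |∂_α z(α,t)|² = c(α,t) ∂_α |∂_α z(α,t)|² + |∂_α z(α,t)|² · (1/π) ∫_{−π}^{π} ∂_β W(β,t) · ∂_β z(β,t)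 / |∂_β z(β,t)|² dβ. -/
open Real MeasureTheory

lemma rdot_self (u : ℂ) : rdot u u = ‖u‖ ^ 2 := by
  rw [Complex.sq_norm, Complex.normSq_apply, rdot_eq]

lemma rdot_add_right (u v w : ℂ) : rdot u (v + w) = rdot u v + rdot u w := by
  simp [rdot_eq]; ring

lemma rdot_real_mul (r : ℝ) (u v : ℂ) : rdot u ((r : ℂ) * v) = r * rdot u v := by
  simp [rdot_eq]; ring

lemma continuous_rdot {X : Type*} [TopologicalSpace X] {u v : X → ℂ}
    (hu : Continuous u) (hv : Continuous v) : Continuous fun x => rdot (u x) (v x) := by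
  simp only [rdot_eq]
  exact ((Complex.continuous_re.comp hu).mul (Complex.continuous_re.comp hv)).add
    ((Complex.continuous_im.comp hu).mul (Complex.continuous_im.comp hv))

lemma hasDerivAt_slice1 {E : Type*} [NormedAddCommGroup E] [NormedSpace ℝ E]
    {f : ℝ × ℝ → E} {L : ℝ × ℝ →L[ℝ] E} {p : ℝ × ℝ} (hf : HasFDerivAt f L p) :
    HasDerivAt (fun a => f (a, p.2)) (L ((1:ℝ), (0:ℝ))) p.1 := by
  have hcurve : HasDerivAt (fun a : ℝ => (a, p.2)) ((1:ℝ), (0:ℝ)) p.1 :=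
    (hasDerivAt_id p.1).prodMk (hasDerivAt_const p.1 p.2)
  have := hf.comp_hasDerivAt p.1 (by simpa using hcurve)
  exact this

lemma hasDerivAt_slice2 {E : Type*} [NormedAddCommGroup E] [NormedSpace ℝ E]
    {f : ℝ × ℝ → E} {L : ℝ × ℝ →L[ℝ] E} {p : ℝ × ℝ} (hf : HasFDerivAt f L p) :
    HasDerivAt (fun s => f (p.1, s)) (L ((0:ℝ), (1:ℝ))) p.2 := by
  have hcurve : HasDerivAt (fun s : ℝ => (p.1, s)) ((0:ℝ), (1:ℝ)) p.2 :=
    (hasDerivAt_const p.2 p.1).prodMk (hasDerivAt_id p.2)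
  have := hf.comp_hasDerivAt p.2 (by simpa using hcurve)
  exact this

lemma HasDerivAt.rdot_sq {h : ℝ → ℂ} {h' : ℂ} {x : ℝ} (hh : HasDerivAt h h' x) :
    HasDerivAt (fun s => ‖h s‖ ^ 2) (2 * rdot (h x) h') x := by
  have hre : HasDerivAt (fun s => (h s).re) h'.re x :=
    (Complex.reCLM.hasFDerivAt.comp_hasDerivAt x hh)
  have him : HasDerivAt (fun s => (h s).im) h'.im x :=
    (Complex.imCLM.hasFDerivAt.comp_hasDerivAt x hh)
  have := ((hre.mul hre).add (him.mul him))
  have heq : (fun s => ‖h s‖ ^ 2)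
      = fun s => (h s).re * (h s).re + (h s).im * (h s).im := by
    funext s; rw [Complex.sq_norm, Complex.normSq_apply]
  rw [heq]
  exact this.congr_deriv (by rw [rdot_eq]; ring)

/-- The Hou–Lowengrub–Shelley choice of tangential velocity: if
`∂_t z = W + c ∂_α z` with `c` as below, then `|∂_α z|²` satisfies a transport equation
whose source is independent of `α`. -/
theorem tangent_length_transport (z W : ℝ → ℝ → ℂ)
    (hz : ContDiff ℝ 2 (fun p : ℝ × ℝ => z p.1 p.2))
    (hW : ContDiff ℝ 2 (fun p : ℝ × ℝ => W p.1 p.2))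
    (hzper : ∀ α t : ℝ, z (α + 2 * π) t = z α t + 2 * π)
    (hWper : ∀ α t : ℝ, W (α + 2 * π) t = W α t)
    (hza : ∀ α t : ℝ, deriv (fun a => z a t) α ≠ 0)
    (c : ℝ → ℝ → ℝ)
    (hc : ∀ α t : ℝ, c α t =
      ((α + π) / (2 * π)) * (∫ β in (-π)..π,
          rdot (deriv (fun b => W b t) β) (deriv (fun b => z b t) β) /
            ‖deriv (fun b => z b t) β‖ ^ 2) -
        ∫ β in (-π)..α,
          rdot (deriv (fun b => W b t) β) (deriv (fun b => z b t) β) /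
            ‖deriv (fun b => z b t) β‖ ^ 2)
    (hevol : ∀ α t : ℝ,
      deriv (fun s => z α s) t = W α t + (c α t : ℂ) * deriv (fun a => z a t) α) :
    ∀ α t : ℝ,
      deriv (fun s => ‖deriv (fun a => z a s) α‖ ^ 2) t =
        c α t * deriv (fun a => ‖deriv (fun a' => z a' t) a‖ ^ 2) α +
          ‖deriv (fun a => z a t) α‖ ^ 2 *
            ((1 / π) * ∫ β in (-π)..π,
              rdot (deriv (fun b => W b t) β) (deriv (fun b => z b t) β) /
                ‖deriv (fun b => z b t) β‖ ^ 2) := by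
  intro α t
  set f : ℝ × ℝ → ℂ := fun p => z p.1 p.2 with hfdef
  set fW : ℝ × ℝ → ℂ := fun p => W p.1 p.2 with hfWdef
  -- basic differentiability
  have hfd : ∀ p : ℝ × ℝ, HasFDerivAt f (fderiv ℝ f p) p := fun p =>
    ((hz.differentiable (by norm_num)) p).hasFDerivAt
  have hfWd : ∀ p : ℝ × ℝ, HasFDerivAt fW (fderiv ℝ fW p) p := fun p =>
    ((hW.differentiable (by norm_num)) p).hasFDerivAt
  -- the tangent derivative fields
  set g : ℝ × ℝ → ℂ := fun p => fderiv ℝ f p ((1:ℝ), (0:ℝ)) with hgdef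
  set gW : ℝ × ℝ → ℂ := fun p => fderiv ℝ fW p ((1:ℝ), (0:ℝ)) with hgWdef
  have hg1 : ContDiff ℝ 1 (fderiv ℝ f) := hz.fderiv_right (by norm_num)
  have hgW1 : ContDiff ℝ 1 (fderiv ℝ fW) := hW.fderiv_right (by norm_num)
  have hgC : Continuous g := (hg1.clm_apply contDiff_const).continuous
  have hgWC : Continuous gW := (hgW1.clm_apply contDiff_const).continuous
  -- slice derivative identities
  have hslice1 : ∀ p : ℝ × ℝ, deriv (fun a => z a p.2) p.1 = g p := fun p =>
    (hasDerivAt_slice1 (hfd p)).deriv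
  have hsliceW : ∀ p : ℝ × ℝ, deriv (fun a => W a p.2) p.1 = gW p := fun p =>
    (hasDerivAt_slice1 (hfWd p)).deriv
  have hgne : ∀ p : ℝ × ℝ, g p ≠ 0 := fun p => by
    rw [← hslice1 p]; exact hza p.1 p.2
  -- second derivative
  set F2 := fderiv ℝ (fderiv ℝ f) (α, t) with hF2def
  have hF2 : HasFDerivAt (fderiv ℝ f) F2 (α, t) :=
    ((hg1.differentiable one_ne_zero) (α, t)).hasFDerivAt
  set A1 := ContinuousLinearMap.apply ℝ ℂ (((1:ℝ), (0:ℝ)) : ℝ × ℝ) with hA1def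
  set A2 := ContinuousLinearMap.apply ℝ ℂ (((0:ℝ), (1:ℝ)) : ℝ × ℝ) with hA2def
  have hgF : HasFDerivAt g (A1.comp F2) (α, t) := A1.hasFDerivAt.comp (α, t) hF2
  have hsymm : F2 ((0:ℝ), (1:ℝ)) ((1:ℝ), (0:ℝ)) = F2 ((1:ℝ), (0:ℝ)) ((0:ℝ), (1:ℝ)) :=
    second_derivative_symmetric (fun y => hfd y) hF2 _ _
  -- t-derivative of g (α, ·)
  have h_t_g : HasDerivAt (fun s => g (α, s)) (F2 ((1:ℝ), (0:ℝ)) ((0:ℝ), (1:ℝ))) t := by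
    have := hasDerivAt_slice2 hgF
    simpa [ContinuousLinearMap.comp_apply, ContinuousLinearMap.apply_apply, hA1def, hA2def, hsymm] using this
  -- the time-derivative field gt
  set gt : ℝ × ℝ → ℂ := fun p => fderiv ℝ f p ((0:ℝ), (1:ℝ)) with hgtdef
  have hgtF : HasFDerivAt gt (A2.comp F2) (α, t) := A2.hasFDerivAt.comp (α, t) hF2
  have h_a_gt : HasDerivAt (fun a => gt (a, t)) (F2 ((1:ℝ), (0:ℝ)) ((0:ℝ), (1:ℝ))) α := by
    have := hasDerivAt_slice1 hgtF
    simpa [ContinuousLinearMap.comp_apply, ContinuousLinearMap.apply_apply, hA1def, hA2def] using this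
  -- evolution equation in terms of g, gt
  have hgt_eq : (fun a => gt (a, t)) = fun a => W a t + (c a t : ℂ) * g (a, t) := by
    funext a
    have h1 : gt (a, t) = deriv (fun s => z a s) t := ((hasDerivAt_slice2 (hfd (a, t))).deriv).symm
    rw [h1, hevol a t, hslice1 (a, t)]
  -- the integrand
  set Q : ℝ → ℝ := fun β =>
      rdot (deriv (fun b => W b t) β) (deriv (fun b => z b t) β) /
        ‖deriv (fun b => z b t) β‖ ^ 2 with hQdef
  have hQ : Q = fun β => rdot (gW (β, t)) (g (β, t)) / ‖g (β, t)‖ ^ 2 := by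
    funext β
    rw [hQdef]
    simp only [hslice1 (β, t), hsliceW (β, t)]
  have hQcont : Continuous Q := by
    rw [hQ]
    refine Continuous.div
      (continuous_rdot (hgWC.comp (by fun_prop)) (hgC.comp (by fun_prop)))
      (((continuous_norm.comp (hgC.comp (by fun_prop))).pow 2)) ?_
    intro β
    exact pow_ne_zero 2 (norm_ne_zero_iff.mpr (hgne (β, t)))
  set I : ℝ := ∫ β in (-π)..π, Q β with hIdef
  -- derivative of c in α
  have hceq : (fun a => c a t) = fun a => ((a + π) / (2 * π)) * I - ∫ β in (-π)..a, Q β := by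
    funext a; rw [hc a t]
  have hlin : HasDerivAt (fun a : ℝ => ((a + π) / (2 * π)) * I) (I / (2 * π)) α := by
    have := (((hasDerivAt_id α).add_const π).div_const (2 * π)).mul_const I
    exact this.congr_deriv (by ring)
  have hInt : HasDerivAt (fun a : ℝ => ∫ β in (-π)..a, Q β) (Q α) α :=
    (hQcont.integral_hasStrictDerivAt (-π) α).hasDerivAt
  have hcd : HasDerivAt (fun a => c a t) (I / (2 * π) - Q α) α := by
    rw [hceq]; exact hlin.sub hInt
  have hcdC : HasDerivAt (fun a => ((c a t : ℝ) : ℂ)) (((I / (2 * π) - Q α : ℝ)) : ℂ) α :=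
    Complex.ofRealCLM.hasFDerivAt.comp_hasDerivAt α hcd
  -- α-derivatives of W and g
  have hWd : HasDerivAt (fun a => W a t) (gW (α, t)) α := hasDerivAt_slice1 (hfWd (α, t))
  have hgα : HasDerivAt (fun a => g (a, t)) ((A1.comp F2) ((1:ℝ), (0:ℝ))) α :=
    hasDerivAt_slice1 hgF
  set zαα : ℂ := (A1.comp F2) ((1:ℝ), (0:ℝ)) with hzααdef
  -- derivative of RHS of the evolution equation
  have hRHS : HasDerivAt (fun a => W a t + (c a t : ℂ) * g (a, t))
      (gW (α, t) + ((((I / (2 * π) - Q α : ℝ)) : ℂ) * g (α, t) + (c α t : ℂ) * zαα)) α :=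
    hWd.add (hcdC.mul hgα)
  have hkey : F2 ((1:ℝ), (0:ℝ)) ((0:ℝ), (1:ℝ))
      = gW (α, t) + ((((I / (2 * π) - Q α : ℝ)) : ℂ) * g (α, t) + (c α t : ℂ) * zαα) := by
    have h := h_a_gt
    rw [hgt_eq] at h
    exact h.unique hRHS
  -- now compute both sides of the goal
  have hLfun : (fun s => ‖deriv (fun a => z a s) α‖ ^ 2)
      = fun s => ‖g (α, s)‖ ^ 2 := by
    funext s; rw [hslice1 (α, s)]
  have hRfun : (fun a => ‖deriv (fun a' => z a' t) a‖ ^ 2)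
      = fun a => ‖g (a, t)‖ ^ 2 := by
    funext a; rw [hslice1 (a, t)]
  have hL : deriv (fun s => ‖deriv (fun a => z a s) α‖ ^ 2) t
      = 2 * rdot (g (α, t)) (F2 ((1:ℝ), (0:ℝ)) ((0:ℝ), (1:ℝ))) := by
    rw [hLfun]; exact (h_t_g.rdot_sq).deriv
  have hR : deriv (fun a => ‖deriv (fun a' => z a' t) a‖ ^ 2) α
      = 2 * rdot (g (α, t)) zαα := by
    rw [hRfun]; exact (hgα.rdot_sq).deriv
  have hQα : Q α = rdot (gW (α, t)) (g (α, t)) / ‖g (α, t)‖ ^ 2 := by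
    rw [hQ]
  have habs : ‖deriv (fun a => z a t) α‖ ^ 2 = ‖g (α, t)‖ ^ 2 := by
    rw [hslice1 (α, t)]
  rw [hL, hR, hkey, habs]
  have hne : ‖g (α, t)‖ ^ 2 ≠ 0 :=
    pow_ne_zero 2 (norm_ne_zero_iff.mpr (hgne (α, t)))
  rw [rdot_add_right, rdot_add_right, rdot_real_mul, rdot_real_mul, rdot_self, hQα,
    rdot_comm (g (α, t)) (gW (α, t))]
  have hg0 : ‖g (α, t)‖ ≠ 0 := norm_ne_zero_iff.mpr (hgne (α, t))
  field_simp
  ring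
end

section
/- Let z : ℝ → ℝ² be twice continuously differentiable with z(α) − (α,0) 2π-periodic, suppose F = sup_{α ∈ ℝ, 0 < |β| ≤ π} |β| / |z(α) − z(α−β)| is finite, and set M₁ = sup_α |z'(α)| and M₂ = sup_α |z''(α)|. Then for all α ∈ ℝ and all β with 0 < |β| ≤ π, |z'(α)| · | β / |z(α) − z(α−β)|² − 1 / ( |z'(α)|² β ) | ≤ M₂ F² (1 + F M₁). -/
open Real

set_option maxHeartbeats 1000000

/-- The bound on the term `D₂` of the paper's kernel decomposition: for a `C²`,
horizontally periodic curve `z` (identifying `ℝ²` with `ℂ`) with arc-chord constant `F`,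
`M₁ = sup |z'|` and `M₂ = sup |z''|`,
`|z'(α)| · | β/|z(α)−z(α−β)|² − 1/(|z'(α)|²β) | ≤ M₂ F² (1 + F M₁)` for `0 < |β| ≤ π`. -/
theorem kernel_D2_bound (z : ℝ → ℂ) (F M₁ M₂ : ℝ)
    (hz : ContDiff ℝ 2 z)
    (hper : Function.Periodic (fun α : ℝ => z α - α) (2 * π))
    (hF : ∀ α β : ℝ, 0 < |β| → |β| ≤ π → |β| ≤ F * ‖z α - z (α - β)‖)
    (hM₁ : ∀ α : ℝ, ‖deriv z α‖ ≤ M₁)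
    (hM₂ : ∀ α : ℝ, ‖deriv (deriv z) α‖ ≤ M₂) :
    ∀ α β : ℝ, 0 < |β| → |β| ≤ π →
      ‖deriv z α‖ *
          |β / ‖z α - z (α - β)‖ ^ 2 -
            1 / (‖deriv z α‖ ^ 2 * β)| ≤ M₂ * F ^ 2 * (1 + F * M₁) := by
  have hM₂0 : 0 ≤ M₂ := le_trans (norm_nonneg _) (hM₂ 0)
  have hdz : Differentiable ℝ z := hz.differentiable (by norm_num)
  have hz1 : ContDiff ℝ 1 (deriv z) := (contDiff_succ_iff_deriv.mp hz).2.2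
  have hdz' : Differentiable ℝ (deriv z) := hz1.differentiable one_ne_zero
  -- Lipschitz bound on deriv z
  have hlip : ∀ s t : ℝ, ‖deriv z s - deriv z t‖ ≤ M₂ * ‖s - t‖ := by
    intro s t
    exact Convex.norm_image_sub_le_of_norm_hasDerivWithin_le
      (f' := deriv (deriv z))
      (fun x _ => ((hdz' x).hasDerivAt).hasDerivWithinAt)
      (fun x _ => by exact hM₂ x)
      convex_univ (Set.mem_univ t) (Set.mem_univ s)
  -- Taylor bound
  have taylor : ∀ α β : ℝ,
      |‖deriv z α‖ * |β| - ‖z α - z (α - β)‖| ≤ M₂ * β ^ 2 := by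
    intro α β
    set c := deriv z α with hc
    have key : ‖(z α - α • c) - (z (α - β) - (α - β) • c)‖ ≤ (M₂ * |β|) * ‖α - (α - β)‖ := by
      apply Convex.norm_image_sub_le_of_norm_hasDerivWithin_le
        (f := fun t => z t - t • c) (f' := fun t => deriv z t - c)
        (s := Set.uIcc (α - β) α)
        (fun x _ => (((hdz x).hasDerivAt).sub
          (by simpa using (hasDerivAt_id x).smul_const c)).hasDerivWithinAt)
        ?_ (convex_uIcc _ _) Set.left_mem_uIcc Set.right_mem_uIcc
      intro x hx
      have h1 : ‖deriv z x - c‖ ≤ M₂ * ‖x - α‖ := hlip x α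
      have h2 : |x - α| ≤ |β| := by
        rw [Set.mem_uIcc] at hx
        rw [abs_le]
        rcases hx with ⟨h3, h4⟩ | ⟨h3, h4⟩ <;>
          constructor <;> nlinarith [le_abs_self β, neg_abs_le β]
      calc ‖deriv z x - c‖ ≤ M₂ * ‖x - α‖ := h1
        _ ≤ M₂ * |β| := by
            rw [Real.norm_eq_abs]; exact mul_le_mul_of_nonneg_left h2 hM₂0
    have e1 : (z α - α • c) - (z (α - β) - (α - β) • c) = (z α - z (α - β)) - β • c := by
      rw [sub_smul]; ring_nf
    have e2 : ‖α - (α - β)‖ = |β| := by rw [Real.norm_eq_abs]; ring_nf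
    rw [e1, e2] at key
    have h3 := abs_norm_sub_norm_le (β • c) (z α - z (α - β))
    have h4 : ‖β • c‖ = |β| * ‖c‖ := by
      rw [norm_smul, Real.norm_eq_abs]
    have h5 : ‖β • c - (z α - z (α - β))‖ = ‖(z α - z (α - β)) - β • c‖ := by
      rw [← norm_neg]; ring_nf
    rw [h4, h5] at h3
    calc |‖c‖ * |β| - ‖z α - z (α - β)‖|
        = |(|β| * ‖c‖ - ‖z α - z (α - β)‖)| := by ring_nf
      _ ≤ ‖(z α - z (α - β)) - β • c‖ := h3
      _ ≤ M₂ * |β| * |β| := key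
      _ = M₂ * β ^ 2 := by rw [mul_assoc, ← sq_abs β]; ring
  -- F > 0
  have hπ : (0:ℝ) < π := Real.pi_pos
  have hFpos : 0 < F := by
    have h := hF 0 π (by rwa [abs_of_pos hπ]) (le_of_eq (abs_of_pos hπ))
    nlinarith [norm_nonneg (z 0 - z (0 - π)), abs_of_pos hπ]
  -- 1 ≤ F * |z'(α)| for every α
  have hFa : ∀ α : ℝ, 1 ≤ F * ‖deriv z α‖ := by
    intro α
    set a := ‖deriv z α‖ with ha
    have key : ∀ ε : ℝ, 0 < ε → ε ≤ π → 1 ≤ F * a + F * M₂ * ε := by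
      intro ε hε hεπ
      have h1 := hF α ε (by rwa [abs_of_pos hε]) (by rwa [abs_of_pos hε])
      have h2 := taylor α ε
      rw [abs_of_pos hε] at h1
      have h3 : ‖z α - z (α - ε)‖ ≤ a * ε + M₂ * ε ^ 2 := by
        rw [abs_of_pos hε] at h2
        cases' abs_le.mp h2 with h2a h2b
        nlinarith
      nlinarith
    by_contra hcon
    push_neg at hcon
    rcases eq_or_lt_of_le hM₂0 with hM | hM
    · have := key π hπ le_rfl
      rw [← hM] at this
      norm_num at this
      linarith
    · set ε := min π ((1 - F * a) / (2 * F * M₂)) with hε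
      have hεpos : 0 < ε := lt_min hπ (div_pos (by linarith) (by positivity))
      have := key ε hεpos (min_le_left _ _)
      have h6 : F * M₂ * ε ≤ F * M₂ * ((1 - F * a) / (2 * F * M₂)) :=
        mul_le_mul_of_nonneg_left (min_le_right _ _) (by positivity)
      have h7 : F * M₂ * ((1 - F * a) / (2 * F * M₂)) = (1 - F * a) / 2 := by
        field_simp
      nlinarith
  -- main estimate
  intro α β hβ hβπ
  set a := ‖deriv z α‖ with ha
  set d := ‖z α - z (α - β)‖ with hd
  have hβF : |β| ≤ F * d := hF α β hβ hβπ
  have haF : 1 ≤ F * a := hFa α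
  have ha0 : 0 < a := by nlinarith
  have hd0 : 0 < d := by nlinarith
  have haM : a ≤ M₁ := hM₁ α
  have ht := taylor α β
  have hβ0 : β ≠ 0 := by rintro rfl; simp at hβ
  have habs : |β| > 0 := hβ
  -- rewrite the difference
  have e1 : β / d ^ 2 - 1 / (a ^ 2 * β) = (a ^ 2 * β ^ 2 - d ^ 2) / (a ^ 2 * β * d ^ 2) := by
    field_simp
  rw [e1, abs_div]
  have e2 : |a ^ 2 * β * d ^ 2| = a ^ 2 * |β| * d ^ 2 := by
    rw [abs_mul, abs_mul, abs_of_pos (by positivity : (0:ℝ) < a ^ 2),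
      abs_of_pos (by positivity : (0:ℝ) < d ^ 2)]
  rw [e2]
  -- |a²β² - d²| ≤ M₂ β² (a|β| + d)
  have hnum : |a ^ 2 * β ^ 2 - d ^ 2| ≤ M₂ * β ^ 2 * (a * |β| + d) := by
    have e3 : a ^ 2 * β ^ 2 - d ^ 2 = (a * |β| - d) * (a * |β| + d) := by
      have : |β| ^ 2 = β ^ 2 := sq_abs β
      nlinarith [sq_abs β]
    rw [e3, abs_mul, abs_of_pos (by positivity : (0:ℝ) < a * |β| + d)]
    exact mul_le_mul_of_nonneg_right ht (by positivity)
  calc a * (|a ^ 2 * β ^ 2 - d ^ 2| / (a ^ 2 * |β| * d ^ 2))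
      = |a ^ 2 * β ^ 2 - d ^ 2| / (a * |β| * d ^ 2) := by
        field_simp
    _ ≤ M₂ * β ^ 2 * (a * |β| + d) / (a * |β| * d ^ 2) := by
        apply div_le_div_of_nonneg_right hnum (by positivity) |>.trans_eq rfl
    _ ≤ M₂ * F ^ 2 * (1 + F * M₁) := by
        rw [div_le_iff₀ (by positivity)]
        have hsq : β ^ 2 ≤ F ^ 2 * d ^ 2 := by nlinarith [sq_abs β, abs_nonneg β]
        have hM1F : 1 ≤ F * M₁ := le_trans haF (by nlinarith)
        have h1 : β ^ 2 * (a * |β|) ≤ F ^ 2 * (a * |β| * d ^ 2) := by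
          nlinarith [mul_le_mul_of_nonneg_right hsq (by positivity : (0:ℝ) ≤ a * |β|)]
        have k2 : 1 ≤ F ^ 2 * M₁ * a := by
          nlinarith [mul_le_mul haF hM1F zero_le_one (le_trans zero_le_one haF)]
        have h2 : β ^ 2 * d ≤ F ^ 3 * M₁ * a * (|β| * d ^ 2) := by
          have k1 : |β| * (|β| * d) ≤ (F * d) * (|β| * d) :=
            mul_le_mul_of_nonneg_right hβF (by positivity)
          nlinarith [sq_abs β,
            mul_le_mul_of_nonneg_right k2 (by positivity : (0:ℝ) ≤ F * (|β| * d ^ 2))]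
        nlinarith [mul_le_mul_of_nonneg_left h1 hM₂0, mul_le_mul_of_nonneg_left h2 hM₂0]
end
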